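/- arXiv:1203.2124 — 9 statements merged into one kernel-verified Lean document; each statement's English description precedes it below -/
import Mathlib

section
/- Let a = (a₁,a₂,a₃), b = (b₁,b₂,b₃) ∈ ℤ³ satisfy the Eschenburg freeness condition and a₁+a₂+a₃ = b₁+b₂+b₃. Then either a₁ ≡ a₂ ≡ a₃ (mod 2) or b₁ ≡ b₂ ≡ b₃ (mod 2). -/
/-- If integer triples `a`, `b` satisfy the Eschenburg freeness condition
and `a₁+a₂+a₃ = b₁+b₂+b₃`, then either all `aᵢ` have the same parity or all `bᵢ` do. -/
theorem eschenburg_parity (a b : Fin 3 → ℤ)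
    (hfree : ∀ σ : Equiv.Perm (Fin 3), Int.gcd (a 0 - b (σ 0)) (a 1 - b (σ 1)) = 1)
    (hsum : a 0 + a 1 + a 2 = b 0 + b 1 + b 2) :
    (∀ i j : Fin 3, a i % 2 = a j % 2) ∨ (∀ i j : Fin 3, b i % 2 = b j % 2) := by
  have ev : ∀ σ : Equiv.Perm (Fin 3),
      ¬((2:ℤ) ∣ (a 0 - b (σ 0)) ∧ (2:ℤ) ∣ (a 1 - b (σ 1))) := by
    rintro σ ⟨h1, h2⟩
    have h := Int.dvd_gcd h1 h2
    rw [hfree σ] at h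
    norm_num at h
  have h01 : ¬((2:ℤ) ∣ (a 0 - b 0) ∧ (2:ℤ) ∣ (a 1 - b 1)) := by
    exact ev ⟨![0,1,2], ![0,1,2], by decide, by decide⟩
  have h10 : ¬((2:ℤ) ∣ (a 0 - b 1) ∧ (2:ℤ) ∣ (a 1 - b 0)) := by
    exact ev ⟨![1,0,2], ![1,0,2], by decide, by decide⟩
  have h02 : ¬((2:ℤ) ∣ (a 0 - b 0) ∧ (2:ℤ) ∣ (a 1 - b 2)) := by
    exact ev ⟨![0,2,1], ![0,2,1], by decide, by decide⟩
  have h21 : ¬((2:ℤ) ∣ (a 0 - b 2) ∧ (2:ℤ) ∣ (a 1 - b 1)) := by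
    exact ev ⟨![2,1,0], ![2,1,0], by decide, by decide⟩
  have h12 : ¬((2:ℤ) ∣ (a 0 - b 1) ∧ (2:ℤ) ∣ (a 1 - b 2)) := by
    exact ev ⟨![1,2,0], ![2,0,1], by decide, by decide⟩
  have h20 : ¬((2:ℤ) ∣ (a 0 - b 2) ∧ (2:ℤ) ∣ (a 1 - b 0)) := by
    exact ev ⟨![2,0,1], ![1,2,0], by decide, by decide⟩
  have key : (a 0 % 2 = a 1 % 2 ∧ a 1 % 2 = a 2 % 2) ∨
      (b 0 % 2 = b 1 % 2 ∧ b 1 % 2 = b 2 % 2) := by omega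
  rcases key with ⟨k1, k2⟩ | ⟨k1, k2⟩
  · left; intro i j; fin_cases i <;> fin_cases j <;> simp only [Fin.zero_eta, Fin.mk_one, show (⟨2, by omega⟩ : Fin 3) = 2 from rfl] <;> omega
  · right; intro i j; fin_cases i <;> fin_cases j <;> simp only [Fin.zero_eta, Fin.mk_one, show (⟨2, by omega⟩ : Fin 3) = 2 from rfl] <;> omega
end

section
/- Let a = (a₁,a₂,a₃), b = (b₁,b₂,b₃) ∈ ℤ³ satisfy the Eschenburg freeness condition and a₁+a₂+a₃ = b₁+b₂+b₃. If p is a prime dividing gcd(aᵢ+aⱼ+1, a_k−b_ℓ) for some indices with {i,j,k} = {1,2,3} and ℓ ∈ {1,2,3}, then p is odd. -/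
lemma key_parity (A B : Fin 3 → ZMod 2)
    (hfree : ∀ σ : Equiv.Perm (Fin 3), A 0 ≠ B (σ 0) ∨ A 1 ≠ B (σ 1))
    (hsum : A 0 + A 1 + A 2 = B 0 + B 1 + B 2)
    (σ : Equiv.Perm (Fin 3)) (ℓ : Fin 3)
    (h1 : A (σ 0) + A (σ 1) + 1 = 0) (h2 : A (σ 2) = B ℓ) : False := by
  revert hfree hsum h1 h2
  revert A B σ ℓ
  decide

/-- **Lemma on odd primes.** If `a`, `b` satisfy the Eschenburg freeness
condition and `a₁+a₂+a₃ = b₁+b₂+b₃`, and a prime `p` divides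
`gcd(aᵢ+aⱼ+1, a_k−b_ℓ)` for indices with `{i,j,k} = {1,2,3}` and `ℓ ∈ {1,2,3}`,
then `p` is odd. -/
theorem prime_dvd_gcd_odd (a b : Fin 3 → ℤ)
    (hfree : ∀ σ : Equiv.Perm (Fin 3), Int.gcd (a 0 - b (σ 0)) (a 1 - b (σ 1)) = 1)
    (hsum : a 0 + a 1 + a 2 = b 0 + b 1 + b 2)
    (p : ℕ) (hp : p.Prime) (σ : Equiv.Perm (Fin 3)) (ℓ : Fin 3)
    (hdvd : p ∣ Int.gcd (a (σ 0) + a (σ 1) + 1) (a (σ 2) - b ℓ)) :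
    Odd p := by
  by_contra hodd
  have hp2 : p = 2 := (Nat.Prime.even_iff hp).mp (Nat.not_odd_iff_even.mp hodd)
  subst hp2
  have hg : ((2 : ℕ) : ℤ) ∣ ((Int.gcd (a (σ 0) + a (σ 1) + 1) (a (σ 2) - b ℓ) : ℕ) : ℤ) :=
    Int.natCast_dvd_natCast.mpr hdvd
  have h1 : (2 : ℤ) ∣ a (σ 0) + a (σ 1) + 1 := by
    exact_mod_cast hg.trans (Int.gcd_dvd_left _ _)
  have h2 : (2 : ℤ) ∣ a (σ 2) - b ℓ := by
    exact_mod_cast hg.trans (Int.gcd_dvd_right _ _)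
  apply key_parity (fun i => (a i : ZMod 2)) (fun i => (b i : ZMod 2)) ?_ ?_ σ ℓ
  · -- h1 in ZMod 2
    have := (ZMod.intCast_zmod_eq_zero_iff_dvd (a (σ 0) + a (σ 1) + 1) 2).mpr h1
    push_cast at this
    convert this using 2 <;> norm_num
  · -- h2
    have := (ZMod.intCast_zmod_eq_zero_iff_dvd (a (σ 2) - b ℓ) 2).mpr h2
    push_cast at this
    linear_combination this
  · intro τ
    by_contra h
    push_neg at h
    obtain ⟨e1, e2⟩ := h
    have d1 : (2 : ℤ) ∣ a 0 - b (τ 0) := by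
      have : ((a 0 - b (τ 0) : ℤ) : ZMod 2) = 0 := by push_cast; rw [e1]; ring
      exact (ZMod.intCast_zmod_eq_zero_iff_dvd _ 2).mp this
    have d2 : (2 : ℤ) ∣ a 1 - b (τ 1) := by
      have : ((a 1 - b (τ 1) : ℤ) : ZMod 2) = 0 := by push_cast; rw [e2]; ring
      exact (ZMod.intCast_zmod_eq_zero_iff_dvd _ 2).mp this
    have : (2 : ℕ) ∣ Int.gcd (a 0 - b (τ 0)) (a 1 - b (τ 1)) := by
      exact_mod_cast Int.dvd_gcd d1 d2
    rw [hfree τ] at this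
    norm_num at this
  · have := congrArg (fun x : ℤ => (x : ZMod 2)) hsum
    push_cast at this
    exact this
end

section
/- Let a = (a₁,a₂,a₃), b = (b₁,b₂,b₃) ∈ ℤ³ satisfy the Eschenburg freeness condition and a₁+a₂+a₃ = b₁+b₂+b₃, and let c ∈ ℤ. Then all five entries of the 5-tuple q^c are odd, and q^c satisfies the Bazaikin freeness condition if and only if gcd(aᵢ+aⱼ+1+2c, a_k−b_ℓ) = 1 for all indices with {i,j,k} = {1,2,3} and all ℓ ∈ {1,2,3}. -/
private lemma key (x y A B : ℤ) (hA : A = 2*x) (hB : B = 2*y) (h : Int.gcd x y = 1) :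
    Int.gcd A B = 2 := by
  subst hA hB; rw [Int.gcd_mul_left, h]; rfl

private lemma keyinv (x y A B : ℤ) (hA : A = 2*x) (hB : B = 2*y) (h : Int.gcd A B = 2) :
    Int.gcd x y = 1 := by
  subst hA hB; rw [Int.gcd_mul_left] at h
  rw [show (2:ℤ).natAbs = 2 from rfl] at h
  omega

private lemma gcd_irr (x d : ℤ) : Int.gcd x (-(x+d)) = Int.gcd x d := by
  apply Nat.dvd_antisymm
  · apply Int.ofNat_dvd.mp
    apply Int.dvd_coe_gcd (Int.gcd_dvd_left _ _)
    have d2 : ((Int.gcd x (-(x+d)) : ℤ)) ∣ -(x+d) := Int.gcd_dvd_right _ _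
    have hd := dvd_sub (d2.mul_right (-1)) (Int.gcd_dvd_left (a := x) (b := -(x+d)))
    rw [show -(x+d)*(-1) - x = d by ring] at hd
    exact hd
  · apply Int.ofNat_dvd.mp
    apply Int.dvd_coe_gcd (Int.gcd_dvd_left _ _)
    have hd := dvd_sub (dvd_neg.mpr (Int.gcd_dvd_left (a := x) (b := d))) (Int.gcd_dvd_right _ _)
    rw [show -x - d = -(x+d) by ring] at hd
    exact hd

private lemma coup (X Y Z : ℤ) (h0 : X + Y + Z = 0) (h : Int.gcd X Z = 1) :
    Int.gcd X Y = 1 := by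
  have d1 : ((Int.gcd X Y : ℤ)) ∣ X := Int.gcd_dvd_left _ _
  have d2 : ((Int.gcd X Y : ℤ)) ∣ Y := Int.gcd_dvd_right _ _
  have d3 : ((Int.gcd X Y : ℤ)) ∣ Z := by
    have hd := dvd_sub (dvd_neg.mpr d1) d2
    rw [show -X - Y = Z by linarith] at hd
    exact hd
  have := Int.dvd_coe_gcd d1 d3
  rw [h] at this
  exact Nat.dvd_one.mp (Int.ofNat_dvd.mp (by exact_mod_cast this))

private lemma perm3_exists : ∀ i j k : Fin 3, i ≠ j → i ≠ k → j ≠ k →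
    ∃ σ : Equiv.Perm (Fin 3), σ 0 = i ∧ σ 1 = j ∧ σ 2 = k := by decide

private lemma perm3_exists' : ∀ k l : Fin 3, k ≠ l →
    ∃ σ : Equiv.Perm (Fin 3), σ 0 = k ∧ σ 1 = l := by decide

set_option maxRecDepth 10000 in
private lemma perm5_exists : ∀ i j k l : Fin 5, i≠j→i≠k→i≠l→j≠k→j≠l→k≠l →
    ∃ σ : Equiv.Perm (Fin 5), σ 0 = i ∧ σ 1 = j ∧ σ 2 = k ∧ σ 3 = l := by decide

private def emb : Fin 3 → Fin 5 := Fin.castLE (by norm_num)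

private lemma emb_inj : ∀ s t : Fin 3, emb s = emb t → s = t := by decide
private lemma emb_ne3 : ∀ t : Fin 3, emb t ≠ 3 := by decide
private lemma emb_ne4 : ∀ t : Fin 3, emb t ≠ 4 := by decide

set_option maxHeartbeats 4000000 in
/-- Let `a`, `b` satisfy the Eschenburg freeness condition with
`a₁+a₂+a₃ = b₁+b₂+b₃`, and let `c ∈ ℤ`.  Then all five entries of the tuple
`q^c = (2(a₁+c)+1, 2(a₂+c)+1, 2(a₃+c)+1, −(2(b₂+c)+1), −(2(b₃+c)+1))` are odd, and
`q^c` satisfies the Bazaikin freeness condition iff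
`gcd(aᵢ+aⱼ+1+2c, a_k−b_ℓ) = 1` for all indices with `{i,j,k} = {1,2,3}`, `ℓ ∈ {1,2,3}`. -/
theorem bazaikin_freeness_iff (a b : Fin 3 → ℤ)
    (hfree : ∀ σ : Equiv.Perm (Fin 3), Int.gcd (a 0 - b (σ 0)) (a 1 - b (σ 1)) = 1)
    (hsum : a 0 + a 1 + a 2 = b 0 + b 1 + b 2)
    (c : ℤ) (q : Fin 5 → ℤ)
    (hq : q = ![2 * (a 0 + c) + 1, 2 * (a 1 + c) + 1, 2 * (a 2 + c) + 1,
      -(2 * (b 1 + c) + 1), -(2 * (b 2 + c) + 1)]) :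
    (∀ i : Fin 5, Odd (q i)) ∧
    ((∀ σ : Equiv.Perm (Fin 5),
        Int.gcd (q (σ 0) + q (σ 1)) (q (σ 2) + q (σ 3)) = 2) ↔
      (∀ σ : Equiv.Perm (Fin 3), ∀ ℓ : Fin 3,
        Int.gcd (a (σ 0) + a (σ 1) + 1 + 2 * c) (a (σ 2) - b ℓ) = 1)) := by
  have hq0 : q 0 = 2 * (a 0 + c) + 1 := by rw [hq]; rfl
  have hq1 : q 1 = 2 * (a 1 + c) + 1 := by rw [hq]; rfl
  have hq2 : q 2 = 2 * (a 2 + c) + 1 := by rw [hq]; rfl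
  have hq3 : q 3 = -(2 * (b 1 + c) + 1) := by rw [hq]; rfl
  have hq4 : q 4 = -(2 * (b 2 + c) + 1) := by rw [hq]; rfl
  have hqa : ∀ t : Fin 3, q (emb t) = 2 * (a t + c) + 1 := by
    intro t; fin_cases t
    · exact hq0
    · exact hq1
    · exact hq2
  have hperm : ∀ σ : Equiv.Perm (Fin 3),
      a (σ 0) + a (σ 1) + a (σ 2) = a 0 + a 1 + a 2 := by
    intro σ
    have := Equiv.sum_comp σ a
    simpa [Fin.sum_univ_three] using this
  refine ⟨?_, ?_, ?_⟩
  · intro i; fin_cases i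
    · exact ⟨a 0 + c, hq0⟩
    · exact ⟨a 1 + c, hq1⟩
    · exact ⟨a 2 + c, hq2⟩
    · exact ⟨-(b 1 + c + 1), by show q 3 = _; rw [hq3]; ring⟩
    · exact ⟨-(b 2 + c + 1), by show q 4 = _; rw [hq4]; ring⟩
  · -- forward direction
    intro hb σ ℓ
    have G : ∀ i j k l : Fin 5, i≠j→i≠k→i≠l→j≠k→j≠l→k≠l →
        Int.gcd (q i + q j) (q k + q l) = 2 := by
      intro i j k l d1 d2 d3 d4 d5 d6
      obtain ⟨τ, e0, e1, e2, e3⟩ := perm5_exists i j k l d1 d2 d3 d4 d5 d6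
      rw [← e0, ← e1, ← e2, ← e3]; exact hb τ
    have dd : ∀ s t : Fin 3, s ≠ t → emb (σ s) ≠ emb (σ t) :=
      fun s t hst hh => hst (σ.injective (emb_inj _ _ hh))
    fin_cases ℓ
    · -- ℓ = 0
      have h := G (emb (σ 0)) (emb (σ 1)) 3 4 (dd 0 1 (by decide))
        (emb_ne3 _) (emb_ne4 _) (emb_ne3 _) (emb_ne4 _) (by decide)
      have h2 := keyinv (a (σ 0) + a (σ 1) + 1 + 2*c) (-(b 1 + b 2 + 2*c + 1))
        (q (emb (σ 0)) + q (emb (σ 1))) (q 3 + q 4)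
        (by rw [hqa (σ 0), hqa (σ 1)]; ring) (by rw [hq3, hq4]; ring) h
      rw [show (-(b 1 + b 2 + 2*c + 1) : ℤ)
            = -((a (σ 0) + a (σ 1) + 1 + 2*c) + (a (σ 2) - b 0)) by
          linear_combination hperm σ + hsum, gcd_irr] at h2
      exact h2
    · -- ℓ = 1
      have h := G (emb (σ 0)) (emb (σ 1)) (emb (σ 2)) 3 (dd 0 1 (by decide))
        (dd 0 2 (by decide)) (emb_ne3 _) (dd 1 2 (by decide)) (emb_ne3 _) (emb_ne3 _)
      exact keyinv (a (σ 0) + a (σ 1) + 1 + 2*c) (a (σ 2) - b 1)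
        (q (emb (σ 0)) + q (emb (σ 1))) (q (emb (σ 2)) + q 3)
        (by rw [hqa (σ 0), hqa (σ 1)]; ring) (by rw [hqa (σ 2), hq3]; ring) h
    · -- ℓ = 2
      have h := G (emb (σ 0)) (emb (σ 1)) (emb (σ 2)) 4 (dd 0 1 (by decide))
        (dd 0 2 (by decide)) (emb_ne4 _) (dd 1 2 (by decide)) (emb_ne4 _) (emb_ne4 _)
      exact keyinv (a (σ 0) + a (σ 1) + 1 + 2*c) (a (σ 2) - b 2)
        (q (emb (σ 0)) + q (emb (σ 1))) (q (emb (σ 2)) + q 4)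
        (by rw [hqa (σ 0), hqa (σ 1)]; ring) (by rw [hqa (σ 2), hq4]; ring) h
  · -- backward direction
    intro hr
    have E : ∀ k l : Fin 3, k ≠ l → Int.gcd (a 0 - b k) (a 1 - b l) = 1 := by
      intro k l hkl
      obtain ⟨σ, h0, h1⟩ := perm3_exists' k l hkl
      rw [← h0, ← h1]; exact hfree σ
    have hrc : ∀ i j k : Fin 3, i≠j → i≠k → j≠k → ∀ ℓ : Fin 3,
        Int.gcd (a i + a j + 1 + 2*c) (a k - b ℓ) = 1 := by
      intro i j k d1 d2 d3 ℓ
      obtain ⟨σ, h0, h1, h2⟩ := perm3_exists i j k d1 d2 d3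
      rw [← h0, ← h1, ← h2]
      have := hr σ ℓ
      convert this using 3 <;> ring
    have hes : ∀ i j : Fin 3, i ≠ j → ∀ k l : Fin 3, k ≠ l →
        Int.gcd (a i - b k) (a j - b l) = 1 := by
      intro i j hij k l hkl
      fin_cases i <;> fin_cases j <;> fin_cases k <;> fin_cases l <;>
        first | exact absurd rfl (by assumption) | skip
      exacts [
      E 0 1 (by decide),
      E 0 2 (by decide),
      E 1 0 (by decide),
      E 1 2 (by decide),
      E 2 0 (by decide),
      E 2 1 (by decide),
      coup (a 0 - b 0) (a 2 - b 1) (a 1 - b 2) (by linear_combination hsum) (E 0 2 (by decide)),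
      coup (a 0 - b 0) (a 2 - b 2) (a 1 - b 1) (by linear_combination hsum) (E 0 1 (by decide)),
      coup (a 0 - b 1) (a 2 - b 0) (a 1 - b 2) (by linear_combination hsum) (E 1 2 (by decide)),
      coup (a 0 - b 1) (a 2 - b 2) (a 1 - b 0) (by linear_combination hsum) (E 1 0 (by decide)),
      coup (a 0 - b 2) (a 2 - b 0) (a 1 - b 1) (by linear_combination hsum) (E 2 1 (by decide)),
      coup (a 0 - b 2) (a 2 - b 1) (a 1 - b 0) (by linear_combination hsum) (E 2 0 (by decide)),
      (Int.gcd_comm _ _).trans (E 1 0 (by decide)),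
      (Int.gcd_comm _ _).trans (E 2 0 (by decide)),
      (Int.gcd_comm _ _).trans (E 0 1 (by decide)),
      (Int.gcd_comm _ _).trans (E 2 1 (by decide)),
      (Int.gcd_comm _ _).trans (E 0 2 (by decide)),
      (Int.gcd_comm _ _).trans (E 1 2 (by decide)),
      coup (a 1 - b 0) (a 2 - b 1) (a 0 - b 2) (by linear_combination hsum) ((Int.gcd_comm _ _).trans (E 2 0 (by decide))),
      coup (a 1 - b 0) (a 2 - b 2) (a 0 - b 1) (by linear_combination hsum) ((Int.gcd_comm _ _).trans (E 1 0 (by decide))),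
      coup (a 1 - b 1) (a 2 - b 0) (a 0 - b 2) (by linear_combination hsum) ((Int.gcd_comm _ _).trans (E 2 1 (by decide))),
      coup (a 1 - b 1) (a 2 - b 2) (a 0 - b 0) (by linear_combination hsum) ((Int.gcd_comm _ _).trans (E 0 1 (by decide))),
      coup (a 1 - b 2) (a 2 - b 0) (a 0 - b 1) (by linear_combination hsum) ((Int.gcd_comm _ _).trans (E 1 2 (by decide))),
      coup (a 1 - b 2) (a 2 - b 1) (a 0 - b 0) (by linear_combination hsum) ((Int.gcd_comm _ _).trans (E 0 2 (by decide))),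
      (Int.gcd_comm _ _).trans (coup (a 0 - b 1) (a 2 - b 0) (a 1 - b 2) (by linear_combination hsum) (E 1 2 (by decide))),
      (Int.gcd_comm _ _).trans (coup (a 0 - b 2) (a 2 - b 0) (a 1 - b 1) (by linear_combination hsum) (E 2 1 (by decide))),
      (Int.gcd_comm _ _).trans (coup (a 0 - b 0) (a 2 - b 1) (a 1 - b 2) (by linear_combination hsum) (E 0 2 (by decide))),
      (Int.gcd_comm _ _).trans (coup (a 0 - b 2) (a 2 - b 1) (a 1 - b 0) (by linear_combination hsum) (E 2 0 (by decide))),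
      (Int.gcd_comm _ _).trans (coup (a 0 - b 0) (a 2 - b 2) (a 1 - b 1) (by linear_combination hsum) (E 0 1 (by decide))),
      (Int.gcd_comm _ _).trans (coup (a 0 - b 1) (a 2 - b 2) (a 1 - b 0) (by linear_combination hsum) (E 1 0 (by decide))),
      (Int.gcd_comm _ _).trans (coup (a 1 - b 1) (a 2 - b 0) (a 0 - b 2) (by linear_combination hsum) ((Int.gcd_comm _ _).trans (E 2 1 (by decide)))),
      (Int.gcd_comm _ _).trans (coup (a 1 - b 2) (a 2 - b 0) (a 0 - b 1) (by linear_combination hsum) ((Int.gcd_comm _ _).trans (E 1 2 (by decide)))),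
      (Int.gcd_comm _ _).trans (coup (a 1 - b 0) (a 2 - b 1) (a 0 - b 2) (by linear_combination hsum) ((Int.gcd_comm _ _).trans (E 2 0 (by decide)))),
      (Int.gcd_comm _ _).trans (coup (a 1 - b 2) (a 2 - b 1) (a 0 - b 0) (by linear_combination hsum) ((Int.gcd_comm _ _).trans (E 0 2 (by decide)))),
      (Int.gcd_comm _ _).trans (coup (a 1 - b 0) (a 2 - b 2) (a 0 - b 1) (by linear_combination hsum) ((Int.gcd_comm _ _).trans (E 1 0 (by decide)))),
      (Int.gcd_comm _ _).trans (coup (a 1 - b 1) (a 2 - b 2) (a 0 - b 0) (by linear_combination hsum) ((Int.gcd_comm _ _).trans (E 0 1 (by decide))))]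
    have W0 : Int.gcd (a 1 + a 2 + 1 + 2*c) (-(b 1 + b 2 + 2*c + 1)) = 1 := by
      rw [show (-(b 1 + b 2 + 2*c + 1) : ℤ)
            = -((a 1 + a 2 + 1 + 2*c) + (a 0 - b 0)) by linear_combination hsum, gcd_irr]
      exact hrc 1 2 0 (by decide) (by decide) (by decide) 0
    have W1 : Int.gcd (a 0 + a 2 + 1 + 2*c) (-(b 1 + b 2 + 2*c + 1)) = 1 := by
      rw [show (-(b 1 + b 2 + 2*c + 1) : ℤ)
            = -((a 0 + a 2 + 1 + 2*c) + (a 1 - b 0)) by linear_combination hsum, gcd_irr]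
      exact hrc 0 2 1 (by decide) (by decide) (by decide) 0
    have W2 : Int.gcd (a 0 + a 1 + 1 + 2*c) (-(b 1 + b 2 + 2*c + 1)) = 1 := by
      rw [show (-(b 1 + b 2 + 2*c + 1) : ℤ)
            = -((a 0 + a 1 + 1 + 2*c) + (a 2 - b 0)) by linear_combination hsum, gcd_irr]
      exact hrc 0 1 2 (by decide) (by decide) (by decide) 0
    have main : ∀ i j k l : Fin 5, i≠j→i≠k→i≠l→j≠k→j≠l→k≠l →
        Int.gcd (q i + q j) (q k + q l) = 2 := by
      intro i j k l d1 d2 d3 d4 d5 d6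
      fin_cases i <;> fin_cases j <;> fin_cases k <;> fin_cases l <;>
        first | exact absurd rfl (by assumption) | skip
      exacts [
    key (a 0 + a 1 + 1 + 2*c) (a 2 - b 1) (q 0 + q 1) (q 2 + q 3) (by rw [hq0, hq1]; ring) (by rw [hq2, hq3]; ring) (hrc 0 1 2 (by decide) (by decide) (by decide) 1),
    key (a 0 + a 1 + 1 + 2*c) (a 2 - b 2) (q 0 + q 1) (q 2 + q 4) (by rw [hq0, hq1]; ring) (by rw [hq2, hq4]; ring) (hrc 0 1 2 (by decide) (by decide) (by decide) 2),
    key (a 0 + a 1 + 1 + 2*c) (a 2 - b 1) (q 0 + q 1) (q 3 + q 2) (by rw [hq0, hq1]; ring) (by rw [hq3, hq2]; ring) (hrc 0 1 2 (by decide) (by decide) (by decide) 1),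
    key (a 0 + a 1 + 1 + 2*c) (-(b 1 + b 2 + 2*c + 1)) (q 0 + q 1) (q 3 + q 4) (by rw [hq0, hq1]; ring) (by rw [hq3, hq4]; ring) W2,
    key (a 0 + a 1 + 1 + 2*c) (a 2 - b 2) (q 0 + q 1) (q 4 + q 2) (by rw [hq0, hq1]; ring) (by rw [hq4, hq2]; ring) (hrc 0 1 2 (by decide) (by decide) (by decide) 2),
    key (a 0 + a 1 + 1 + 2*c) (-(b 1 + b 2 + 2*c + 1)) (q 0 + q 1) (q 4 + q 3) (by rw [hq0, hq1]; ring) (by rw [hq4, hq3]; ring) W2,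
    key (a 0 + a 2 + 1 + 2*c) (a 1 - b 1) (q 0 + q 2) (q 1 + q 3) (by rw [hq0, hq2]; ring) (by rw [hq1, hq3]; ring) (hrc 0 2 1 (by decide) (by decide) (by decide) 1),
    key (a 0 + a 2 + 1 + 2*c) (a 1 - b 2) (q 0 + q 2) (q 1 + q 4) (by rw [hq0, hq2]; ring) (by rw [hq1, hq4]; ring) (hrc 0 2 1 (by decide) (by decide) (by decide) 2),
    key (a 0 + a 2 + 1 + 2*c) (a 1 - b 1) (q 0 + q 2) (q 3 + q 1) (by rw [hq0, hq2]; ring) (by rw [hq3, hq1]; ring) (hrc 0 2 1 (by decide) (by decide) (by decide) 1),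
    key (a 0 + a 2 + 1 + 2*c) (-(b 1 + b 2 + 2*c + 1)) (q 0 + q 2) (q 3 + q 4) (by rw [hq0, hq2]; ring) (by rw [hq3, hq4]; ring) W1,
    key (a 0 + a 2 + 1 + 2*c) (a 1 - b 2) (q 0 + q 2) (q 4 + q 1) (by rw [hq0, hq2]; ring) (by rw [hq4, hq1]; ring) (hrc 0 2 1 (by decide) (by decide) (by decide) 2),
    key (a 0 + a 2 + 1 + 2*c) (-(b 1 + b 2 + 2*c + 1)) (q 0 + q 2) (q 4 + q 3) (by rw [hq0, hq2]; ring) (by rw [hq4, hq3]; ring) W1,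
    key (a 0 - b 1) (a 1 + a 2 + 1 + 2*c) (q 0 + q 3) (q 1 + q 2) (by rw [hq0, hq3]; ring) (by rw [hq1, hq2]; ring) ((Int.gcd_comm _ _).trans (hrc 1 2 0 (by decide) (by decide) (by decide) 1)),
    key (a 0 - b 1) (a 1 - b 2) (q 0 + q 3) (q 1 + q 4) (by rw [hq0, hq3]; ring) (by rw [hq1, hq4]; ring) (hes 0 1 (by decide) 1 2 (by decide)),
    key (a 0 - b 1) (a 1 + a 2 + 1 + 2*c) (q 0 + q 3) (q 2 + q 1) (by rw [hq0, hq3]; ring) (by rw [hq2, hq1]; ring) ((Int.gcd_comm _ _).trans (hrc 1 2 0 (by decide) (by decide) (by decide) 1)),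
    key (a 0 - b 1) (a 2 - b 2) (q 0 + q 3) (q 2 + q 4) (by rw [hq0, hq3]; ring) (by rw [hq2, hq4]; ring) (hes 0 2 (by decide) 1 2 (by decide)),
    key (a 0 - b 1) (a 1 - b 2) (q 0 + q 3) (q 4 + q 1) (by rw [hq0, hq3]; ring) (by rw [hq4, hq1]; ring) (hes 0 1 (by decide) 1 2 (by decide)),
    key (a 0 - b 1) (a 2 - b 2) (q 0 + q 3) (q 4 + q 2) (by rw [hq0, hq3]; ring) (by rw [hq4, hq2]; ring) (hes 0 2 (by decide) 1 2 (by decide)),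
    key (a 0 - b 2) (a 1 + a 2 + 1 + 2*c) (q 0 + q 4) (q 1 + q 2) (by rw [hq0, hq4]; ring) (by rw [hq1, hq2]; ring) ((Int.gcd_comm _ _).trans (hrc 1 2 0 (by decide) (by decide) (by decide) 2)),
    key (a 0 - b 2) (a 1 - b 1) (q 0 + q 4) (q 1 + q 3) (by rw [hq0, hq4]; ring) (by rw [hq1, hq3]; ring) (hes 0 1 (by decide) 2 1 (by decide)),
    key (a 0 - b 2) (a 1 + a 2 + 1 + 2*c) (q 0 + q 4) (q 2 + q 1) (by rw [hq0, hq4]; ring) (by rw [hq2, hq1]; ring) ((Int.gcd_comm _ _).trans (hrc 1 2 0 (by decide) (by decide) (by decide) 2)),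
    key (a 0 - b 2) (a 2 - b 1) (q 0 + q 4) (q 2 + q 3) (by rw [hq0, hq4]; ring) (by rw [hq2, hq3]; ring) (hes 0 2 (by decide) 2 1 (by decide)),
    key (a 0 - b 2) (a 1 - b 1) (q 0 + q 4) (q 3 + q 1) (by rw [hq0, hq4]; ring) (by rw [hq3, hq1]; ring) (hes 0 1 (by decide) 2 1 (by decide)),
    key (a 0 - b 2) (a 2 - b 1) (q 0 + q 4) (q 3 + q 2) (by rw [hq0, hq4]; ring) (by rw [hq3, hq2]; ring) (hes 0 2 (by decide) 2 1 (by decide)),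
    key (a 0 + a 1 + 1 + 2*c) (a 2 - b 1) (q 1 + q 0) (q 2 + q 3) (by rw [hq1, hq0]; ring) (by rw [hq2, hq3]; ring) (hrc 0 1 2 (by decide) (by decide) (by decide) 1),
    key (a 0 + a 1 + 1 + 2*c) (a 2 - b 2) (q 1 + q 0) (q 2 + q 4) (by rw [hq1, hq0]; ring) (by rw [hq2, hq4]; ring) (hrc 0 1 2 (by decide) (by decide) (by decide) 2),
    key (a 0 + a 1 + 1 + 2*c) (a 2 - b 1) (q 1 + q 0) (q 3 + q 2) (by rw [hq1, hq0]; ring) (by rw [hq3, hq2]; ring) (hrc 0 1 2 (by decide) (by decide) (by decide) 1),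
    key (a 0 + a 1 + 1 + 2*c) (-(b 1 + b 2 + 2*c + 1)) (q 1 + q 0) (q 3 + q 4) (by rw [hq1, hq0]; ring) (by rw [hq3, hq4]; ring) W2,
    key (a 0 + a 1 + 1 + 2*c) (a 2 - b 2) (q 1 + q 0) (q 4 + q 2) (by rw [hq1, hq0]; ring) (by rw [hq4, hq2]; ring) (hrc 0 1 2 (by decide) (by decide) (by decide) 2),
    key (a 0 + a 1 + 1 + 2*c) (-(b 1 + b 2 + 2*c + 1)) (q 1 + q 0) (q 4 + q 3) (by rw [hq1, hq0]; ring) (by rw [hq4, hq3]; ring) W2,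
    key (a 1 + a 2 + 1 + 2*c) (a 0 - b 1) (q 1 + q 2) (q 0 + q 3) (by rw [hq1, hq2]; ring) (by rw [hq0, hq3]; ring) (hrc 1 2 0 (by decide) (by decide) (by decide) 1),
    key (a 1 + a 2 + 1 + 2*c) (a 0 - b 2) (q 1 + q 2) (q 0 + q 4) (by rw [hq1, hq2]; ring) (by rw [hq0, hq4]; ring) (hrc 1 2 0 (by decide) (by decide) (by decide) 2),
    key (a 1 + a 2 + 1 + 2*c) (a 0 - b 1) (q 1 + q 2) (q 3 + q 0) (by rw [hq1, hq2]; ring) (by rw [hq3, hq0]; ring) (hrc 1 2 0 (by decide) (by decide) (by decide) 1),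
    key (a 1 + a 2 + 1 + 2*c) (-(b 1 + b 2 + 2*c + 1)) (q 1 + q 2) (q 3 + q 4) (by rw [hq1, hq2]; ring) (by rw [hq3, hq4]; ring) W0,
    key (a 1 + a 2 + 1 + 2*c) (a 0 - b 2) (q 1 + q 2) (q 4 + q 0) (by rw [hq1, hq2]; ring) (by rw [hq4, hq0]; ring) (hrc 1 2 0 (by decide) (by decide) (by decide) 2),
    key (a 1 + a 2 + 1 + 2*c) (-(b 1 + b 2 + 2*c + 1)) (q 1 + q 2) (q 4 + q 3) (by rw [hq1, hq2]; ring) (by rw [hq4, hq3]; ring) W0,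
    key (a 1 - b 1) (a 0 + a 2 + 1 + 2*c) (q 1 + q 3) (q 0 + q 2) (by rw [hq1, hq3]; ring) (by rw [hq0, hq2]; ring) ((Int.gcd_comm _ _).trans (hrc 0 2 1 (by decide) (by decide) (by decide) 1)),
    key (a 1 - b 1) (a 0 - b 2) (q 1 + q 3) (q 0 + q 4) (by rw [hq1, hq3]; ring) (by rw [hq0, hq4]; ring) (hes 1 0 (by decide) 1 2 (by decide)),
    key (a 1 - b 1) (a 0 + a 2 + 1 + 2*c) (q 1 + q 3) (q 2 + q 0) (by rw [hq1, hq3]; ring) (by rw [hq2, hq0]; ring) ((Int.gcd_comm _ _).trans (hrc 0 2 1 (by decide) (by decide) (by decide) 1)),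
    key (a 1 - b 1) (a 2 - b 2) (q 1 + q 3) (q 2 + q 4) (by rw [hq1, hq3]; ring) (by rw [hq2, hq4]; ring) (hes 1 2 (by decide) 1 2 (by decide)),
    key (a 1 - b 1) (a 0 - b 2) (q 1 + q 3) (q 4 + q 0) (by rw [hq1, hq3]; ring) (by rw [hq4, hq0]; ring) (hes 1 0 (by decide) 1 2 (by decide)),
    key (a 1 - b 1) (a 2 - b 2) (q 1 + q 3) (q 4 + q 2) (by rw [hq1, hq3]; ring) (by rw [hq4, hq2]; ring) (hes 1 2 (by decide) 1 2 (by decide)),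
    key (a 1 - b 2) (a 0 + a 2 + 1 + 2*c) (q 1 + q 4) (q 0 + q 2) (by rw [hq1, hq4]; ring) (by rw [hq0, hq2]; ring) ((Int.gcd_comm _ _).trans (hrc 0 2 1 (by decide) (by decide) (by decide) 2)),
    key (a 1 - b 2) (a 0 - b 1) (q 1 + q 4) (q 0 + q 3) (by rw [hq1, hq4]; ring) (by rw [hq0, hq3]; ring) (hes 1 0 (by decide) 2 1 (by decide)),
    key (a 1 - b 2) (a 0 + a 2 + 1 + 2*c) (q 1 + q 4) (q 2 + q 0) (by rw [hq1, hq4]; ring) (by rw [hq2, hq0]; ring) ((Int.gcd_comm _ _).trans (hrc 0 2 1 (by decide) (by decide) (by decide) 2)),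
    key (a 1 - b 2) (a 2 - b 1) (q 1 + q 4) (q 2 + q 3) (by rw [hq1, hq4]; ring) (by rw [hq2, hq3]; ring) (hes 1 2 (by decide) 2 1 (by decide)),
    key (a 1 - b 2) (a 0 - b 1) (q 1 + q 4) (q 3 + q 0) (by rw [hq1, hq4]; ring) (by rw [hq3, hq0]; ring) (hes 1 0 (by decide) 2 1 (by decide)),
    key (a 1 - b 2) (a 2 - b 1) (q 1 + q 4) (q 3 + q 2) (by rw [hq1, hq4]; ring) (by rw [hq3, hq2]; ring) (hes 1 2 (by decide) 2 1 (by decide)),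
    key (a 0 + a 2 + 1 + 2*c) (a 1 - b 1) (q 2 + q 0) (q 1 + q 3) (by rw [hq2, hq0]; ring) (by rw [hq1, hq3]; ring) (hrc 0 2 1 (by decide) (by decide) (by decide) 1),
    key (a 0 + a 2 + 1 + 2*c) (a 1 - b 2) (q 2 + q 0) (q 1 + q 4) (by rw [hq2, hq0]; ring) (by rw [hq1, hq4]; ring) (hrc 0 2 1 (by decide) (by decide) (by decide) 2),
    key (a 0 + a 2 + 1 + 2*c) (a 1 - b 1) (q 2 + q 0) (q 3 + q 1) (by rw [hq2, hq0]; ring) (by rw [hq3, hq1]; ring) (hrc 0 2 1 (by decide) (by decide) (by decide) 1),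
    key (a 0 + a 2 + 1 + 2*c) (-(b 1 + b 2 + 2*c + 1)) (q 2 + q 0) (q 3 + q 4) (by rw [hq2, hq0]; ring) (by rw [hq3, hq4]; ring) W1,
    key (a 0 + a 2 + 1 + 2*c) (a 1 - b 2) (q 2 + q 0) (q 4 + q 1) (by rw [hq2, hq0]; ring) (by rw [hq4, hq1]; ring) (hrc 0 2 1 (by decide) (by decide) (by decide) 2),
    key (a 0 + a 2 + 1 + 2*c) (-(b 1 + b 2 + 2*c + 1)) (q 2 + q 0) (q 4 + q 3) (by rw [hq2, hq0]; ring) (by rw [hq4, hq3]; ring) W1,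
    key (a 1 + a 2 + 1 + 2*c) (a 0 - b 1) (q 2 + q 1) (q 0 + q 3) (by rw [hq2, hq1]; ring) (by rw [hq0, hq3]; ring) (hrc 1 2 0 (by decide) (by decide) (by decide) 1),
    key (a 1 + a 2 + 1 + 2*c) (a 0 - b 2) (q 2 + q 1) (q 0 + q 4) (by rw [hq2, hq1]; ring) (by rw [hq0, hq4]; ring) (hrc 1 2 0 (by decide) (by decide) (by decide) 2),
    key (a 1 + a 2 + 1 + 2*c) (a 0 - b 1) (q 2 + q 1) (q 3 + q 0) (by rw [hq2, hq1]; ring) (by rw [hq3, hq0]; ring) (hrc 1 2 0 (by decide) (by decide) (by decide) 1),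
    key (a 1 + a 2 + 1 + 2*c) (-(b 1 + b 2 + 2*c + 1)) (q 2 + q 1) (q 3 + q 4) (by rw [hq2, hq1]; ring) (by rw [hq3, hq4]; ring) W0,
    key (a 1 + a 2 + 1 + 2*c) (a 0 - b 2) (q 2 + q 1) (q 4 + q 0) (by rw [hq2, hq1]; ring) (by rw [hq4, hq0]; ring) (hrc 1 2 0 (by decide) (by decide) (by decide) 2),
    key (a 1 + a 2 + 1 + 2*c) (-(b 1 + b 2 + 2*c + 1)) (q 2 + q 1) (q 4 + q 3) (by rw [hq2, hq1]; ring) (by rw [hq4, hq3]; ring) W0,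
    key (a 2 - b 1) (a 0 + a 1 + 1 + 2*c) (q 2 + q 3) (q 0 + q 1) (by rw [hq2, hq3]; ring) (by rw [hq0, hq1]; ring) ((Int.gcd_comm _ _).trans (hrc 0 1 2 (by decide) (by decide) (by decide) 1)),
    key (a 2 - b 1) (a 0 - b 2) (q 2 + q 3) (q 0 + q 4) (by rw [hq2, hq3]; ring) (by rw [hq0, hq4]; ring) (hes 2 0 (by decide) 1 2 (by decide)),
    key (a 2 - b 1) (a 0 + a 1 + 1 + 2*c) (q 2 + q 3) (q 1 + q 0) (by rw [hq2, hq3]; ring) (by rw [hq1, hq0]; ring) ((Int.gcd_comm _ _).trans (hrc 0 1 2 (by decide) (by decide) (by decide) 1)),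
    key (a 2 - b 1) (a 1 - b 2) (q 2 + q 3) (q 1 + q 4) (by rw [hq2, hq3]; ring) (by rw [hq1, hq4]; ring) (hes 2 1 (by decide) 1 2 (by decide)),
    key (a 2 - b 1) (a 0 - b 2) (q 2 + q 3) (q 4 + q 0) (by rw [hq2, hq3]; ring) (by rw [hq4, hq0]; ring) (hes 2 0 (by decide) 1 2 (by decide)),
    key (a 2 - b 1) (a 1 - b 2) (q 2 + q 3) (q 4 + q 1) (by rw [hq2, hq3]; ring) (by rw [hq4, hq1]; ring) (hes 2 1 (by decide) 1 2 (by decide)),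
    key (a 2 - b 2) (a 0 + a 1 + 1 + 2*c) (q 2 + q 4) (q 0 + q 1) (by rw [hq2, hq4]; ring) (by rw [hq0, hq1]; ring) ((Int.gcd_comm _ _).trans (hrc 0 1 2 (by decide) (by decide) (by decide) 2)),
    key (a 2 - b 2) (a 0 - b 1) (q 2 + q 4) (q 0 + q 3) (by rw [hq2, hq4]; ring) (by rw [hq0, hq3]; ring) (hes 2 0 (by decide) 2 1 (by decide)),
    key (a 2 - b 2) (a 0 + a 1 + 1 + 2*c) (q 2 + q 4) (q 1 + q 0) (by rw [hq2, hq4]; ring) (by rw [hq1, hq0]; ring) ((Int.gcd_comm _ _).trans (hrc 0 1 2 (by decide) (by decide) (by decide) 2)),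
    key (a 2 - b 2) (a 1 - b 1) (q 2 + q 4) (q 1 + q 3) (by rw [hq2, hq4]; ring) (by rw [hq1, hq3]; ring) (hes 2 1 (by decide) 2 1 (by decide)),
    key (a 2 - b 2) (a 0 - b 1) (q 2 + q 4) (q 3 + q 0) (by rw [hq2, hq4]; ring) (by rw [hq3, hq0]; ring) (hes 2 0 (by decide) 2 1 (by decide)),
    key (a 2 - b 2) (a 1 - b 1) (q 2 + q 4) (q 3 + q 1) (by rw [hq2, hq4]; ring) (by rw [hq3, hq1]; ring) (hes 2 1 (by decide) 2 1 (by decide)),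
    key (a 0 - b 1) (a 1 + a 2 + 1 + 2*c) (q 3 + q 0) (q 1 + q 2) (by rw [hq3, hq0]; ring) (by rw [hq1, hq2]; ring) ((Int.gcd_comm _ _).trans (hrc 1 2 0 (by decide) (by decide) (by decide) 1)),
    key (a 0 - b 1) (a 1 - b 2) (q 3 + q 0) (q 1 + q 4) (by rw [hq3, hq0]; ring) (by rw [hq1, hq4]; ring) (hes 0 1 (by decide) 1 2 (by decide)),
    key (a 0 - b 1) (a 1 + a 2 + 1 + 2*c) (q 3 + q 0) (q 2 + q 1) (by rw [hq3, hq0]; ring) (by rw [hq2, hq1]; ring) ((Int.gcd_comm _ _).trans (hrc 1 2 0 (by decide) (by decide) (by decide) 1)),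
    key (a 0 - b 1) (a 2 - b 2) (q 3 + q 0) (q 2 + q 4) (by rw [hq3, hq0]; ring) (by rw [hq2, hq4]; ring) (hes 0 2 (by decide) 1 2 (by decide)),
    key (a 0 - b 1) (a 1 - b 2) (q 3 + q 0) (q 4 + q 1) (by rw [hq3, hq0]; ring) (by rw [hq4, hq1]; ring) (hes 0 1 (by decide) 1 2 (by decide)),
    key (a 0 - b 1) (a 2 - b 2) (q 3 + q 0) (q 4 + q 2) (by rw [hq3, hq0]; ring) (by rw [hq4, hq2]; ring) (hes 0 2 (by decide) 1 2 (by decide)),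
    key (a 1 - b 1) (a 0 + a 2 + 1 + 2*c) (q 3 + q 1) (q 0 + q 2) (by rw [hq3, hq1]; ring) (by rw [hq0, hq2]; ring) ((Int.gcd_comm _ _).trans (hrc 0 2 1 (by decide) (by decide) (by decide) 1)),
    key (a 1 - b 1) (a 0 - b 2) (q 3 + q 1) (q 0 + q 4) (by rw [hq3, hq1]; ring) (by rw [hq0, hq4]; ring) (hes 1 0 (by decide) 1 2 (by decide)),
    key (a 1 - b 1) (a 0 + a 2 + 1 + 2*c) (q 3 + q 1) (q 2 + q 0) (by rw [hq3, hq1]; ring) (by rw [hq2, hq0]; ring) ((Int.gcd_comm _ _).trans (hrc 0 2 1 (by decide) (by decide) (by decide) 1)),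
    key (a 1 - b 1) (a 2 - b 2) (q 3 + q 1) (q 2 + q 4) (by rw [hq3, hq1]; ring) (by rw [hq2, hq4]; ring) (hes 1 2 (by decide) 1 2 (by decide)),
    key (a 1 - b 1) (a 0 - b 2) (q 3 + q 1) (q 4 + q 0) (by rw [hq3, hq1]; ring) (by rw [hq4, hq0]; ring) (hes 1 0 (by decide) 1 2 (by decide)),
    key (a 1 - b 1) (a 2 - b 2) (q 3 + q 1) (q 4 + q 2) (by rw [hq3, hq1]; ring) (by rw [hq4, hq2]; ring) (hes 1 2 (by decide) 1 2 (by decide)),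
    key (a 2 - b 1) (a 0 + a 1 + 1 + 2*c) (q 3 + q 2) (q 0 + q 1) (by rw [hq3, hq2]; ring) (by rw [hq0, hq1]; ring) ((Int.gcd_comm _ _).trans (hrc 0 1 2 (by decide) (by decide) (by decide) 1)),
    key (a 2 - b 1) (a 0 - b 2) (q 3 + q 2) (q 0 + q 4) (by rw [hq3, hq2]; ring) (by rw [hq0, hq4]; ring) (hes 2 0 (by decide) 1 2 (by decide)),
    key (a 2 - b 1) (a 0 + a 1 + 1 + 2*c) (q 3 + q 2) (q 1 + q 0) (by rw [hq3, hq2]; ring) (by rw [hq1, hq0]; ring) ((Int.gcd_comm _ _).trans (hrc 0 1 2 (by decide) (by decide) (by decide) 1)),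
    key (a 2 - b 1) (a 1 - b 2) (q 3 + q 2) (q 1 + q 4) (by rw [hq3, hq2]; ring) (by rw [hq1, hq4]; ring) (hes 2 1 (by decide) 1 2 (by decide)),
    key (a 2 - b 1) (a 0 - b 2) (q 3 + q 2) (q 4 + q 0) (by rw [hq3, hq2]; ring) (by rw [hq4, hq0]; ring) (hes 2 0 (by decide) 1 2 (by decide)),
    key (a 2 - b 1) (a 1 - b 2) (q 3 + q 2) (q 4 + q 1) (by rw [hq3, hq2]; ring) (by rw [hq4, hq1]; ring) (hes 2 1 (by decide) 1 2 (by decide)),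
    key (-(b 1 + b 2 + 2*c + 1)) (a 0 + a 1 + 1 + 2*c) (q 3 + q 4) (q 0 + q 1) (by rw [hq3, hq4]; ring) (by rw [hq0, hq1]; ring) ((Int.gcd_comm _ _).trans W2),
    key (-(b 1 + b 2 + 2*c + 1)) (a 0 + a 2 + 1 + 2*c) (q 3 + q 4) (q 0 + q 2) (by rw [hq3, hq4]; ring) (by rw [hq0, hq2]; ring) ((Int.gcd_comm _ _).trans W1),
    key (-(b 1 + b 2 + 2*c + 1)) (a 0 + a 1 + 1 + 2*c) (q 3 + q 4) (q 1 + q 0) (by rw [hq3, hq4]; ring) (by rw [hq1, hq0]; ring) ((Int.gcd_comm _ _).trans W2),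
    key (-(b 1 + b 2 + 2*c + 1)) (a 1 + a 2 + 1 + 2*c) (q 3 + q 4) (q 1 + q 2) (by rw [hq3, hq4]; ring) (by rw [hq1, hq2]; ring) ((Int.gcd_comm _ _).trans W0),
    key (-(b 1 + b 2 + 2*c + 1)) (a 0 + a 2 + 1 + 2*c) (q 3 + q 4) (q 2 + q 0) (by rw [hq3, hq4]; ring) (by rw [hq2, hq0]; ring) ((Int.gcd_comm _ _).trans W1),
    key (-(b 1 + b 2 + 2*c + 1)) (a 1 + a 2 + 1 + 2*c) (q 3 + q 4) (q 2 + q 1) (by rw [hq3, hq4]; ring) (by rw [hq2, hq1]; ring) ((Int.gcd_comm _ _).trans W0),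
    key (a 0 - b 2) (a 1 + a 2 + 1 + 2*c) (q 4 + q 0) (q 1 + q 2) (by rw [hq4, hq0]; ring) (by rw [hq1, hq2]; ring) ((Int.gcd_comm _ _).trans (hrc 1 2 0 (by decide) (by decide) (by decide) 2)),
    key (a 0 - b 2) (a 1 - b 1) (q 4 + q 0) (q 1 + q 3) (by rw [hq4, hq0]; ring) (by rw [hq1, hq3]; ring) (hes 0 1 (by decide) 2 1 (by decide)),
    key (a 0 - b 2) (a 1 + a 2 + 1 + 2*c) (q 4 + q 0) (q 2 + q 1) (by rw [hq4, hq0]; ring) (by rw [hq2, hq1]; ring) ((Int.gcd_comm _ _).trans (hrc 1 2 0 (by decide) (by decide) (by decide) 2)),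
    key (a 0 - b 2) (a 2 - b 1) (q 4 + q 0) (q 2 + q 3) (by rw [hq4, hq0]; ring) (by rw [hq2, hq3]; ring) (hes 0 2 (by decide) 2 1 (by decide)),
    key (a 0 - b 2) (a 1 - b 1) (q 4 + q 0) (q 3 + q 1) (by rw [hq4, hq0]; ring) (by rw [hq3, hq1]; ring) (hes 0 1 (by decide) 2 1 (by decide)),
    key (a 0 - b 2) (a 2 - b 1) (q 4 + q 0) (q 3 + q 2) (by rw [hq4, hq0]; ring) (by rw [hq3, hq2]; ring) (hes 0 2 (by decide) 2 1 (by decide)),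
    key (a 1 - b 2) (a 0 + a 2 + 1 + 2*c) (q 4 + q 1) (q 0 + q 2) (by rw [hq4, hq1]; ring) (by rw [hq0, hq2]; ring) ((Int.gcd_comm _ _).trans (hrc 0 2 1 (by decide) (by decide) (by decide) 2)),
    key (a 1 - b 2) (a 0 - b 1) (q 4 + q 1) (q 0 + q 3) (by rw [hq4, hq1]; ring) (by rw [hq0, hq3]; ring) (hes 1 0 (by decide) 2 1 (by decide)),
    key (a 1 - b 2) (a 0 + a 2 + 1 + 2*c) (q 4 + q 1) (q 2 + q 0) (by rw [hq4, hq1]; ring) (by rw [hq2, hq0]; ring) ((Int.gcd_comm _ _).trans (hrc 0 2 1 (by decide) (by decide) (by decide) 2)),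
    key (a 1 - b 2) (a 2 - b 1) (q 4 + q 1) (q 2 + q 3) (by rw [hq4, hq1]; ring) (by rw [hq2, hq3]; ring) (hes 1 2 (by decide) 2 1 (by decide)),
    key (a 1 - b 2) (a 0 - b 1) (q 4 + q 1) (q 3 + q 0) (by rw [hq4, hq1]; ring) (by rw [hq3, hq0]; ring) (hes 1 0 (by decide) 2 1 (by decide)),
    key (a 1 - b 2) (a 2 - b 1) (q 4 + q 1) (q 3 + q 2) (by rw [hq4, hq1]; ring) (by rw [hq3, hq2]; ring) (hes 1 2 (by decide) 2 1 (by decide)),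
    key (a 2 - b 2) (a 0 + a 1 + 1 + 2*c) (q 4 + q 2) (q 0 + q 1) (by rw [hq4, hq2]; ring) (by rw [hq0, hq1]; ring) ((Int.gcd_comm _ _).trans (hrc 0 1 2 (by decide) (by decide) (by decide) 2)),
    key (a 2 - b 2) (a 0 - b 1) (q 4 + q 2) (q 0 + q 3) (by rw [hq4, hq2]; ring) (by rw [hq0, hq3]; ring) (hes 2 0 (by decide) 2 1 (by decide)),
    key (a 2 - b 2) (a 0 + a 1 + 1 + 2*c) (q 4 + q 2) (q 1 + q 0) (by rw [hq4, hq2]; ring) (by rw [hq1, hq0]; ring) ((Int.gcd_comm _ _).trans (hrc 0 1 2 (by decide) (by decide) (by decide) 2)),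
    key (a 2 - b 2) (a 1 - b 1) (q 4 + q 2) (q 1 + q 3) (by rw [hq4, hq2]; ring) (by rw [hq1, hq3]; ring) (hes 2 1 (by decide) 2 1 (by decide)),
    key (a 2 - b 2) (a 0 - b 1) (q 4 + q 2) (q 3 + q 0) (by rw [hq4, hq2]; ring) (by rw [hq3, hq0]; ring) (hes 2 0 (by decide) 2 1 (by decide)),
    key (a 2 - b 2) (a 1 - b 1) (q 4 + q 2) (q 3 + q 1) (by rw [hq4, hq2]; ring) (by rw [hq3, hq1]; ring) (hes 2 1 (by decide) 2 1 (by decide)),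
    key (-(b 1 + b 2 + 2*c + 1)) (a 0 + a 1 + 1 + 2*c) (q 4 + q 3) (q 0 + q 1) (by rw [hq4, hq3]; ring) (by rw [hq0, hq1]; ring) ((Int.gcd_comm _ _).trans W2),
    key (-(b 1 + b 2 + 2*c + 1)) (a 0 + a 2 + 1 + 2*c) (q 4 + q 3) (q 0 + q 2) (by rw [hq4, hq3]; ring) (by rw [hq0, hq2]; ring) ((Int.gcd_comm _ _).trans W1),
    key (-(b 1 + b 2 + 2*c + 1)) (a 0 + a 1 + 1 + 2*c) (q 4 + q 3) (q 1 + q 0) (by rw [hq4, hq3]; ring) (by rw [hq1, hq0]; ring) ((Int.gcd_comm _ _).trans W2),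
    key (-(b 1 + b 2 + 2*c + 1)) (a 1 + a 2 + 1 + 2*c) (q 4 + q 3) (q 1 + q 2) (by rw [hq4, hq3]; ring) (by rw [hq1, hq2]; ring) ((Int.gcd_comm _ _).trans W0),
    key (-(b 1 + b 2 + 2*c + 1)) (a 0 + a 2 + 1 + 2*c) (q 4 + q 3) (q 2 + q 0) (by rw [hq4, hq3]; ring) (by rw [hq2, hq0]; ring) ((Int.gcd_comm _ _).trans W1),
    key (-(b 1 + b 2 + 2*c + 1)) (a 1 + a 2 + 1 + 2*c) (q 4 + q 3) (q 2 + q 1) (by rw [hq4, hq3]; ring) (by rw [hq2, hq1]; ring) ((Int.gcd_comm _ _).trans W0)]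
    intro σ
    exact main (σ 0) (σ 1) (σ 2) (σ 3)
      (fun h => absurd (σ.injective h) (by decide))
      (fun h => absurd (σ.injective h) (by decide))
      (fun h => absurd (σ.injective h) (by decide))
      (fun h => absurd (σ.injective h) (by decide))
      (fun h => absurd (σ.injective h) (by decide))
      (fun h => absurd (σ.injective h) (by decide))
end

section
/- Let a = (a₁,a₂,a₃), b = (b₁,b₂,b₃) ∈ ℤ³ satisfy the Eschenburg freeness condition, a₁+a₂+a₃ = b₁+b₂+b₃, and a_k ≠ b_ℓ for all k, ℓ ∈ {1,2,3}. Let P be the product, over all pairs (k,ℓ) ∈ {1,2,3}², of the product of all primes p dividing a_k − b_ℓ with gcd(p, aᵢ+aⱼ+1) = 1 (where {i,j,k} = {1,2,3}). Then for every integer μ ≥ 1 and for c = 2^{μ−1}·P^μ as well as for c = −2^{μ−1}·P^μ, one has gcd(aᵢ+aⱼ+1+2c, a_k−b_ℓ) = 1 for all indices with {i,j,k} = {1,2,3} and all ℓ ∈ {1,2,3}. -/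
/-- **Lemma: freeness for special `c`.**  Let `a`, `b` satisfy the Eschenburg
freeness condition, `a₁+a₂+a₃ = b₁+b₂+b₃`, and `a_k ≠ b_ℓ` for all `k, ℓ`.  Let `P` be the
product, over all pairs `(k,ℓ)`, of the product of all primes `p` dividing `a_k − b_ℓ` with
`gcd(p, aᵢ+aⱼ+1) = 1` (where `{i,j,k} = {1,2,3}`, so `aᵢ+aⱼ+1 = a₁+a₂+a₃ − a_k + 1`).
Then for every `μ ≥ 1` and `c = ±2^{μ−1}·P^μ` one has
`gcd(aᵢ+aⱼ+1+2c, a_k−b_ℓ) = 1` for all relevant indices. -/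
theorem gcd_eq_one_for_special_c (a b : Fin 3 → ℤ)
    (hfree : ∀ σ : Equiv.Perm (Fin 3), Int.gcd (a 0 - b (σ 0)) (a 1 - b (σ 1)) = 1)
    (hsum : a 0 + a 1 + a 2 = b 0 + b 1 + b 2)
    (hne : ∀ k ℓ : Fin 3, a k ≠ b ℓ)
    (P : ℤ)
    (hP : P = ∏ k : Fin 3, ∏ ℓ : Fin 3,
      ∏ p ∈ (a k - b ℓ).natAbs.primeFactors.filter
        (fun (p : ℕ) => Int.gcd (p : ℤ) (a 0 + a 1 + a 2 - a k + 1) = 1), (p : ℤ))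
    (μ : ℕ) (hμ : 1 ≤ μ) (c : ℤ)
    (hc : c = 2 ^ (μ - 1) * P ^ μ ∨ c = -(2 ^ (μ - 1) * P ^ μ)) :
    ∀ σ : Equiv.Perm (Fin 3), ∀ ℓ : Fin 3,
      Int.gcd (a (σ 0) + a (σ 1) + 1 + 2 * c) (a (σ 2) - b ℓ) = 1 := by
  -- sums are invariant under permutations
  have hbsum : ∀ τ : Equiv.Perm (Fin 3), b (τ 0) + b (τ 1) + b (τ 2) = b 0 + b 1 + b 2 := by
    intro τ
    have := Equiv.sum_comp τ b
    simpa [Fin.sum_univ_three] using this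
  have hasum : ∀ τ : Equiv.Perm (Fin 3), a (τ 0) + a (τ 1) + a (τ 2) = a 0 + a 1 + a 2 := by
    intro τ
    have := Equiv.sum_comp τ a
    simpa [Fin.sum_univ_three] using this
  -- freeness for all pairs of positions within a permutation
  have hfree' : ∀ τ : Equiv.Perm (Fin 3), ∀ i j : Fin 3, i ≠ j →
      IsCoprime (a i - b (τ i)) (a j - b (τ j)) := by
    intro τ i j hij
    have h01 : IsCoprime (a 0 - b (τ 0)) (a 1 - b (τ 1)) :=
      Int.isCoprime_iff_gcd_eq_one.mpr (hfree τ)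
    have hzero : (a 0 - b (τ 0)) + (a 1 - b (τ 1)) + (a 2 - b (τ 2)) = 0 := by
      have := hbsum τ; linarith
    have h02 : IsCoprime (a 0 - b (τ 0)) (a 2 - b (τ 2)) := by
      have h := (h01.neg_right).add_mul_left_right (-1)
      have he : -(a 1 - b (τ 1)) + (a 0 - b (τ 0)) * (-1) = a 2 - b (τ 2) := by linarith
      rwa [he] at h
    have h12 : IsCoprime (a 1 - b (τ 1)) (a 2 - b (τ 2)) := by
      have h := (h01.symm.neg_right).add_mul_left_right (-1)
      have he : -(a 0 - b (τ 0)) + (a 1 - b (τ 1)) * (-1) = a 2 - b (τ 2) := by linarith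
      rwa [he] at h
    fin_cases i <;> fin_cases j <;>
      first
        | exact absurd rfl hij
        | exact h01 | exact h01.symm | exact h02 | exact h02.symm
        | exact h12 | exact h12.symm
  -- general freeness: any two entries in distinct rows and distinct columns are coprime
  have gen : ∀ k1 k2 l1 l2 : Fin 3, k1 ≠ k2 → l1 ≠ l2 →
      IsCoprime (a k1 - b l1) (a k2 - b l2) := by
    intro k1 k2 l1 l2 hk hl
    set s1 := Equiv.swap k1 l1 with hs1
    have hs1k2 : s1 k2 ≠ l1 := by
      intro h
      apply hk
      have : s1 k2 = s1 k1 := by rw [h, hs1, Equiv.swap_apply_left]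
      exact (s1.injective this).symm
    set τ : Equiv.Perm (Fin 3) := s1.trans (Equiv.swap (s1 k2) l2) with hτ
    have h1 : τ k1 = l1 := by
      show Equiv.swap (s1 k2) l2 (s1 k1) = l1
      rw [hs1, Equiv.swap_apply_left]
      exact Equiv.swap_apply_of_ne_of_ne (Ne.symm hs1k2) hl
    have h2 : τ k2 = l2 := by
      show Equiv.swap (s1 k2) l2 (s1 k2) = l2
      exact Equiv.swap_apply_left _ _
    have := hfree' τ k1 k2 hk
    rwa [h1, h2] at this
  -- a prime divides P iff it divides some (a k - b l) and is coprime to the corresponding sum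
  have factA : ∀ q : ℕ, q.Prime → (q : ℤ) ∣ P → ∃ k l : Fin 3, (q : ℤ) ∣ a k - b l ∧
      Int.gcd (q : ℤ) (a 0 + a 1 + a 2 - a k + 1) = 1 := by
    intro q hq hqP
    have hqz : Prime (q : ℤ) := Nat.prime_iff_prime_int.mp hq
    rw [hP] at hqP
    obtain ⟨k, -, hk⟩ := hqz.exists_mem_finset_dvd hqP
    obtain ⟨l, -, hl⟩ := hqz.exists_mem_finset_dvd hk
    obtain ⟨r, hr, hqr⟩ := hqz.exists_mem_finset_dvd hl
    have hqr' : q ∣ r := Int.natCast_dvd_natCast.mp hqr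
    rw [Finset.mem_filter] at hr
    have hrprime : r.Prime := Nat.prime_of_mem_primeFactors hr.1
    have hqeq : q = r := (Nat.prime_dvd_prime_iff_eq hq hrprime).mp hqr'
    subst hqeq
    refine ⟨k, l, ?_, hr.2⟩
    have : q ∣ (a k - b l).natAbs := Nat.dvd_of_mem_primeFactors hr.1
    exact Int.natCast_dvd.mpr this
  have factB : ∀ q : ℕ, q.Prime → ∀ k l : Fin 3, (q : ℤ) ∣ a k - b l →
      Int.gcd (q : ℤ) (a 0 + a 1 + a 2 - a k + 1) = 1 → (q : ℤ) ∣ P := by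
    intro q hq k l hdvd hcop
    have hne0 : (a k - b l).natAbs ≠ 0 := by
      simpa [Int.natAbs_eq_zero, sub_eq_zero] using hne k l
    have hqdvd : q ∣ (a k - b l).natAbs := Int.natCast_dvd.mp hdvd
    have hmem : q ∈ ((a k - b l).natAbs.primeFactors.filter
        (fun (p : ℕ) => Int.gcd (p : ℤ) (a 0 + a 1 + a 2 - a k + 1) = 1)) :=
      Finset.mem_filter.mpr ⟨Nat.mem_primeFactors.mpr ⟨hq, hqdvd, hne0⟩, hcop⟩
    have h1 : (q : ℤ) ∣ ∏ p ∈ (a k - b l).natAbs.primeFactors.filter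
        (fun (p : ℕ) => Int.gcd (p : ℤ) (a 0 + a 1 + a 2 - a k + 1) = 1), (p : ℤ) :=
      Finset.dvd_prod_of_mem _ hmem
    have h2 := Finset.dvd_prod_of_mem (fun l' : Fin 3 =>
      ∏ p ∈ (a k - b l').natAbs.primeFactors.filter
        (fun (p : ℕ) => Int.gcd (p : ℤ) (a 0 + a 1 + a 2 - a k + 1) = 1), (p : ℤ))
      (Finset.mem_univ l)
    have h3 := Finset.dvd_prod_of_mem (fun k' : Fin 3 => ∏ l' : Fin 3,
      ∏ p ∈ (a k' - b l').natAbs.primeFactors.filter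
        (fun (p : ℕ) => Int.gcd (p : ℤ) (a 0 + a 1 + a 2 - a k' + 1) = 1), (p : ℤ))
      (Finset.mem_univ k)
    rw [hP]
    exact h1.trans (h2.trans h3)
  -- P divides c
  have hPc : P ∣ c := by
    have h1 : P ∣ P ^ μ := dvd_pow_self P (by omega)
    rcases hc with h | h <;> rw [h]
    · exact Dvd.dvd.mul_left h1 _
    · exact (Dvd.dvd.mul_left h1 _).neg_right
  have h2unit : ¬ IsUnit (2 : ℤ) := by
    rw [Int.isUnit_iff]; omega
  intro σ ℓ
  by_contra hcon
  have hN0 : a (σ 2) - b ℓ ≠ 0 := sub_ne_zero.mpr (hne _ _)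
  obtain ⟨p, hp, hpd⟩ := Nat.exists_prime_and_dvd hcon
  have hpx : (p : ℤ) ∣ a (σ 0) + a (σ 1) + 1 + 2 * c := by
    exact dvd_trans (Int.natCast_dvd_natCast.mpr hpd) (Int.gcd_dvd_left _ _)
  have hpN : (p : ℤ) ∣ a (σ 2) - b ℓ := by
    exact dvd_trans (Int.natCast_dvd_natCast.mpr hpd) (Int.gcd_dvd_right _ _)
  have hperm : a (σ 0) + a (σ 1) + a (σ 2) = a 0 + a 1 + a 2 := hasum σ
  have hpunit : ¬ IsUnit ((p : ℕ) : ℤ) := (Nat.prime_iff_prime_int.mp hp).not_unit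
  have hσ01 : σ 0 ≠ σ 1 := fun h => by simpa using σ.injective h
  have hxs : a (σ 0) + a (σ 1) + 1 + 2 * c
      = (a 0 + a 1 + a 2 - a (σ 2) + 1) + 2 * c := by linarith
  rw [hxs] at hpx
  by_cases hps : (p : ℤ) ∣ a 0 + a 1 + a 2 - a (σ 2) + 1
  · -- p divides s, hence p ∣ 2c
    have hp2c : (p : ℤ) ∣ 2 * c := by
      have := hpx.sub hps
      simpa using this
    by_cases hp2 : p = 2
    · -- parity argument
      subst hp2
      have h2s : (2 : ℤ) ∣ a 0 + a 1 + a 2 - a (σ 2) + 1 := by exact_mod_cast hps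
      have h2N : (2 : ℤ) ∣ a (σ 2) - b ℓ := by exact_mod_cast hpN
      have key : ∀ l1 l2 : Fin 3, l1 ≠ l2 →
          b ℓ + b l1 + b l2 = b 0 + b 1 + b 2 → False := by
        intro l1 l2 hl12 hb
        have hor : ((2:ℤ) ∣ a (σ 0) - b l1 ∧ (2:ℤ) ∣ a (σ 1) - b l2) ∨
            ((2:ℤ) ∣ a (σ 0) - b l2 ∧ (2:ℤ) ∣ a (σ 1) - b l1) := by omega
        rcases hor with ⟨u, v⟩ | ⟨u, v⟩
        · exact h2unit ((gen _ _ _ _ hσ01 hl12).isUnit_of_dvd' u v)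
        · exact h2unit ((gen _ _ _ _ hσ01 (Ne.symm hl12)).isUnit_of_dvd' u v)
      fin_cases ℓ
      · exact key 1 2 (by decide) (by simp only [Fin.isValue, Fin.zero_eta, Fin.mk_one, Fin.reduceFinMk]; try ring)
      · exact key 0 2 (by decide) (by simp only [Fin.isValue, Fin.zero_eta, Fin.mk_one, Fin.reduceFinMk]; try ring)
      · exact key 0 1 (by decide) (by simp only [Fin.isValue, Fin.zero_eta, Fin.mk_one, Fin.reduceFinMk]; try ring)
    · -- p odd
      have hpodd : ¬ (p : ℤ) ∣ 2 := by
        intro h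
        have : p ∣ 2 := by exact_mod_cast h
        exact hp2 ((Nat.prime_dvd_prime_iff_eq hp Nat.prime_two).mp this)
      have hpz : Prime ((p : ℕ) : ℤ) := Nat.prime_iff_prime_int.mp hp
      have hpc : (p : ℤ) ∣ c := (hpz.dvd_mul.mp hp2c).resolve_left hpodd
      have hpP : (p : ℤ) ∣ P := by
        have hpc' : (p : ℤ) ∣ 2 ^ (μ - 1) * P ^ μ := by
          rcases hc with h | h <;> rw [h] at hpc
          · exact hpc
          · simpa using hpc.neg_right
        rcases hpz.dvd_mul.mp hpc' with h | h
        · exact absurd (hpz.dvd_of_dvd_pow h) hpodd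
        · exact hpz.dvd_of_dvd_pow h
      obtain ⟨k, l', hdk, hck⟩ := factA p hp hpP
      have hcop : IsCoprime ((p : ℕ) : ℤ) (a 0 + a 1 + a 2 - a k + 1) :=
        Int.isCoprime_iff_gcd_eq_one.mpr hck
      by_cases hk2 : k = σ 2
      · subst hk2
        exact hpunit (hcop.isUnit_of_dvd' dvd_rfl hps)
      · by_cases hl : l' = ℓ
        · subst hl
          have hdiff : (p : ℤ) ∣ a 0 + a 1 + a 2 - a k + 1 := by
            have h1 := hdk.sub hpN
            have h2 := hps.sub h1
            have he : (a 0 + a 1 + a 2 - a (σ 2) + 1) - ((a k - b l') - (a (σ 2) - b l'))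
                = a 0 + a 1 + a 2 - a k + 1 := by ring
            rwa [he] at h2
          exact hpunit (hcop.isUnit_of_dvd' dvd_rfl hdiff)
        · exact hpunit ((gen k (σ 2) l' ℓ hk2 hl).isUnit_of_dvd' hdk hpN)
  · -- p does not divide s: then p ∣ P by factB, hence p ∣ 2c, hence p ∣ s, contradiction
    have hgcd : Int.gcd (p : ℤ) (a 0 + a 1 + a 2 - a (σ 2) + 1) = 1 := by
      rw [Int.gcd_def, Int.natAbs_natCast]
      rw [Nat.coprime_iff_gcd_eq_one.symm] at *
      refine (Nat.Prime.coprime_iff_not_dvd hp).mpr ?_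
      intro h
      exact hps (Int.natCast_dvd.mpr h)
    have hpP := factB p hp (σ 2) ℓ hpN hgcd
    have hpc : (p : ℤ) ∣ c := hpP.trans hPc
    have : (p : ℤ) ∣ a 0 + a 1 + a 2 - a (σ 2) + 1 := by
      have h := hpx.sub (hpc.mul_left 2)
      simpa using h
    exact hps this
end

section
/- Let a = (a₁,a₂,a₃), b = (b₁,b₂,b₃) ∈ ℤ³ satisfy the Eschenburg freeness condition, a₁+a₂+a₃ = b₁+b₂+b₃, and a_k ≠ b_ℓ for all k, ℓ ∈ {1,2,3}. Let P be the product, over all pairs (k,ℓ) ∈ {1,2,3}², of the product of all primes p dividing a_k − b_ℓ with gcd(p, aᵢ+aⱼ+1) = 1 (where {i,j,k} = {1,2,3}). Then for every integer μ ≥ 1 and for c = 2^{μ−1}·P^μ as well as for c = −2^{μ−1}·P^μ, all five entries of the 5-tuple q^c are odd and q^c satisfies the Bazaikin freeness condition. -/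
set_option maxHeartbeats 4000000

private theorem gcd2' {u v x y : ℤ} (h : Int.gcd u v = 1) (hx : x = 2*u) (hy : y = 2*v) :
    Int.gcd x y = 2 := by
  subst hx hy; rw [Int.gcd_mul_left, h]; simp

private theorem not_both' {p x y : ℤ} (hp : 2 ≤ p) (h : Int.gcd x y = 1)
    (h1 : p ∣ x) (h2 : p ∣ y) : False := by
  have hg := Int.dvd_coe_gcd h1 h2
  rw [h] at hg
  have : p ≤ 1 := Int.le_of_dvd (by norm_num) (by exact_mod_cast hg)
  omega

private theorem gcd_one_of' {u v x y : ℤ} (h : Int.gcd x y = 1)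
    (hx : ∀ d : ℤ, d ∣ u → d ∣ v → d ∣ x) (hy : ∀ d : ℤ, d ∣ u → d ∣ v → d ∣ y) :
    Int.gcd u v = 1 := by
  have h1 : (Int.gcd u v : ℤ) ∣ x := hx _ (Int.gcd_dvd_left u v) (Int.gcd_dvd_right u v)
  have h2 : (Int.gcd u v : ℤ) ∣ y := hy _ (Int.gcd_dvd_left u v) (Int.gcd_dvd_right u v)
  have h3 := Int.dvd_coe_gcd h1 h2
  rw [h] at h3
  exact Nat.dvd_one.mp (by exact_mod_cast h3)

private theorem gcd_aux' {u v x y : ℤ} (h : Int.gcd x y = 1)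
    (huv : (u = x ∧ v = y) ∨ (u = y ∧ v = x) ∨ (u = x ∧ v = -x-y) ∨ (u = -x-y ∧ v = x)
      ∨ (u = y ∧ v = -x-y) ∨ (u = -x-y ∧ v = y)) : Int.gcd u v = 1 := by
  rcases huv with ⟨h1,h2⟩|⟨h1,h2⟩|⟨h1,h2⟩|⟨h1,h2⟩|⟨h1,h2⟩|⟨h1,h2⟩ <;> rw [h1, h2]
  · exact h
  · rwa [Int.gcd_comm]
  · refine gcd_one_of' h (fun d h1 _ => h1) (fun d h1 h2 => ?_)
    have h3 := dvd_sub (dvd_neg.mpr h1) h2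
    have e : -x - (-x-y) = y := by ring
    rwa [e] at h3
  · refine gcd_one_of' h (fun d _ h2 => h2) (fun d h1 h2 => ?_)
    have h3 := dvd_sub (dvd_neg.mpr h2) h1
    have e : -x - (-x-y) = y := by ring
    rwa [e] at h3
  · refine gcd_one_of' h (fun d h1 h2 => ?_) (fun d h1 _ => h1)
    have h3 := dvd_sub (dvd_neg.mpr h1) h2
    have e : -y - (-x-y) = x := by ring
    rwa [e] at h3
  · refine gcd_one_of' h (fun d h1 h2 => ?_) (fun d _ h2 => h2)
    have h3 := dvd_sub (dvd_neg.mpr h2) h1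
    have e : -y - (-x-y) = x := by ring
    rwa [e] at h3

private theorem not_dvd_two_of_prime_ne_two {p : ℕ} (pp : p.Prime) (hp2 : p ≠ 2) :
    ¬ ((p:ℤ) ∣ 2) := by
  intro h
  have : p ∣ 2 := by exact_mod_cast h
  exact hp2 ((Nat.prime_dvd_prime_iff_eq pp Nat.prime_two).mp this)

private theorem gcd_eq_one_of_not_dvd {p : ℕ} (pp : p.Prime) {N : ℤ} (h : ¬ (p:ℤ) ∣ N) :
    Int.gcd (p:ℤ) N = 1 := by
  have : Nat.Coprime p N.natAbs := pp.coprime_iff_not_dvd.mpr (fun hd => h (Int.natCast_dvd.mpr hd))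
  simpa [Int.gcd] using this

private theorem false_of_gcd_one_dvd {p : ℕ} (pp : p.Prime) {N : ℤ}
    (h : Int.gcd (p:ℤ) N = 1) (hd : (p:ℤ) ∣ N) : False :=
  not_both' (by exact_mod_cast pp.two_le) h (dvd_refl _) hd

private theorem dvd_c_of_dvd_P {p P c : ℤ} {μ : ℕ} (hμ : 1 ≤ μ)
    (hc : c = 2 ^ (μ - 1) * P ^ μ ∨ c = -(2 ^ (μ - 1) * P ^ μ)) (h : p ∣ P) : p ∣ c := by
  have h1 : p ∣ P ^ μ := dvd_pow h (by omega)
  have h2 : p ∣ 2 ^ (μ-1) * P ^ μ := h1.mul_left _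
  rcases hc with rfl | rfl
  · exact h2
  · exact dvd_neg.mpr h2

private theorem dvd_P_of_dvd_c {p P c : ℤ} (hp : Prime p) (hodd : ¬ p ∣ 2) {μ : ℕ}
    (hc : c = 2 ^ (μ - 1) * P ^ μ ∨ c = -(2 ^ (μ - 1) * P ^ μ)) (h : p ∣ c) : p ∣ P := by
  have h2 : p ∣ 2 ^ (μ-1) * P ^ μ := by
    rcases hc with rfl | rfl
    · exact h
    · exact dvd_neg.mp h
  rcases hp.dvd_mul.mp h2 with h3 | h3
  · exact absurd (hp.dvd_of_dvd_pow h3) hodd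
  · exact hp.dvd_of_dvd_pow h3

/-- **Corollary: non-singular Bazaikin biquotients.**  Let `a`, `b` satisfy
the Eschenburg freeness condition, `a₁+a₂+a₃ = b₁+b₂+b₃`, and `a_k ≠ b_ℓ` for all `k, ℓ`.
Let `P` be the product, over all pairs `(k,ℓ)`, of the product of all primes `p` dividing
`a_k − b_ℓ` with `gcd(p, aᵢ+aⱼ+1) = 1` (where `{i,j,k} = {1,2,3}`).  Then for every
`μ ≥ 1` and `c = ±2^{μ−1}·P^μ`, all entries of the tuple
`q^c = (2(a₁+c)+1, 2(a₂+c)+1, 2(a₃+c)+1, −(2(b₂+c)+1), −(2(b₃+c)+1))` are odd and `q^c`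
satisfies the Bazaikin freeness condition. -/
theorem bazaikin_nonsingular_for_special_c (a b : Fin 3 → ℤ)
    (hfree : ∀ σ : Equiv.Perm (Fin 3), Int.gcd (a 0 - b (σ 0)) (a 1 - b (σ 1)) = 1)
    (hsum : a 0 + a 1 + a 2 = b 0 + b 1 + b 2)
    (hne : ∀ k ℓ : Fin 3, a k ≠ b ℓ)
    (P : ℤ)
    (hP : P = ∏ k : Fin 3, ∏ ℓ : Fin 3,
      ∏ p ∈ (a k - b ℓ).natAbs.primeFactors.filter
        (fun (p : ℕ) => Int.gcd (p : ℤ) (a 0 + a 1 + a 2 - a k + 1) = 1), (p : ℤ))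
    (μ : ℕ) (hμ : 1 ≤ μ) (c : ℤ)
    (hc : c = 2 ^ (μ - 1) * P ^ μ ∨ c = -(2 ^ (μ - 1) * P ^ μ))
    (q : Fin 5 → ℤ)
    (hq : q = ![2 * (a 0 + c) + 1, 2 * (a 1 + c) + 1, 2 * (a 2 + c) + 1,
      -(2 * (b 1 + c) + 1), -(2 * (b 2 + c) + 1)]) :
    (∀ i : Fin 5, Odd (q i)) ∧
    (∀ σ : Equiv.Perm (Fin 5),
      Int.gcd (q (σ 0) + q (σ 1)) (q (σ 2) + q (σ 3)) = 2) := by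
  -- extended Eschenburg condition
  have E01 : ∀ ℓ m : Fin 3, ℓ ≠ m → Int.gcd (a 0 - b ℓ) (a 1 - b m) = 1 := by
    intro ℓ m h
    fin_cases ℓ <;> fin_cases m <;> simp at h ⊢ <;>
      first
      | exact hfree 1
      | simpa [Equiv.swap_apply_def] using hfree (Equiv.swap 0 1)
      | simpa [Equiv.swap_apply_def] using hfree (Equiv.swap 0 2)
      | simpa [Equiv.swap_apply_def] using hfree (Equiv.swap 1 2)
      | simpa using hfree (finRotate 3)
      | exact (by have h := hfree ((finRotate 3)^2); rwa [show ((finRotate 3)^2) 0 = 2 from by simp [sq], show ((finRotate 3)^2) 1 = 0 from by simp [sq]] at h)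
  have L1 : ∀ i j ℓ m : Fin 3, i ≠ j → ℓ ≠ m → Int.gcd (a i - b ℓ) (a j - b m) = 1 := by
    intro i j ℓ m hij hlm
    fin_cases i <;> fin_cases j <;> fin_cases ℓ <;> fin_cases m <;> simp at hij hlm ⊢ <;>
      first
      | exact gcd_aux' (E01 0 1 (by decide)) (by omega)
      | exact gcd_aux' (E01 0 2 (by decide)) (by omega)
      | exact gcd_aux' (E01 1 0 (by decide)) (by omega)
      | exact gcd_aux' (E01 1 2 (by decide)) (by omega)
      | exact gcd_aux' (E01 2 0 (by decide)) (by omega)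
      | exact gcd_aux' (E01 2 1 (by decide)) (by omega)
  -- the key coprimality
  have key0 : ∀ k ℓ : Fin 3, Int.gcd (a 0 + a 1 + a 2 - a k + 2*c + 1) (a k - b ℓ) = 1 := by
    intro k ℓ
    by_contra hcon
    obtain ⟨p, pp, hpd⟩ := Nat.exists_prime_and_dvd hcon
    have hx : (p:ℤ) ∣ a 0 + a 1 + a 2 - a k + 2*c + 1 :=
      (Int.natCast_dvd_natCast.mpr hpd).trans (Int.gcd_dvd_left _ _)
    have hy : (p:ℤ) ∣ a k - b ℓ :=
      (Int.natCast_dvd_natCast.mpr hpd).trans (Int.gcd_dvd_right _ _)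
    by_cases hp2 : p = 2
    · subst hp2
      push_cast at hx hy
      have hD : ((2:ℤ) ∣ a 0 - b 0 ∧ (2:ℤ) ∣ a 1 - b 1) ∨ ((2:ℤ) ∣ a 0 - b 0 ∧ (2:ℤ) ∣ a 1 - b 2) ∨ ((2:ℤ) ∣ a 0 - b 1 ∧ (2:ℤ) ∣ a 1 - b 0) ∨ ((2:ℤ) ∣ a 0 - b 1 ∧ (2:ℤ) ∣ a 1 - b 2) ∨ ((2:ℤ) ∣ a 0 - b 2 ∧ (2:ℤ) ∣ a 1 - b 0) ∨ ((2:ℤ) ∣ a 0 - b 2 ∧ (2:ℤ) ∣ a 1 - b 1) ∨ ((2:ℤ) ∣ a 0 - b 0 ∧ (2:ℤ) ∣ a 2 - b 1) ∨ ((2:ℤ) ∣ a 0 - b 0 ∧ (2:ℤ) ∣ a 2 - b 2) ∨ ((2:ℤ) ∣ a 0 - b 1 ∧ (2:ℤ) ∣ a 2 - b 0) ∨ ((2:ℤ) ∣ a 0 - b 1 ∧ (2:ℤ) ∣ a 2 - b 2) ∨ ((2:ℤ) ∣ a 0 - b 2 ∧ (2:ℤ) ∣ a 2 - b 0) ∨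 ((2:ℤ) ∣ a 0 - b 2 ∧ (2:ℤ) ∣ a 2 - b 1) ∨ ((2:ℤ) ∣ a 1 - b 0 ∧ (2:ℤ) ∣ a 2 - b 1) ∨ ((2:ℤ) ∣ a 1 - b 0 ∧ (2:ℤ) ∣ a 2 - b 2) ∨ ((2:ℤ) ∣ a 1 - b 1 ∧ (2:ℤ) ∣ a 2 - b 0) ∨ ((2:ℤ) ∣ a 1 - b 1 ∧ (2:ℤ) ∣ a 2 - b 2) ∨ ((2:ℤ) ∣ a 1 - b 2 ∧ (2:ℤ) ∣ a 2 - b 0) ∨ ((2:ℤ) ∣ a 1 - b 2 ∧ (2:ℤ) ∣ a 2 - b 1) := by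
        fin_cases k <;> fin_cases ℓ <;> simp_all <;> omega
      rcases hD with ⟨u1,u2⟩|⟨u1,u2⟩|⟨u1,u2⟩|⟨u1,u2⟩|⟨u1,u2⟩|⟨u1,u2⟩|⟨u1,u2⟩|⟨u1,u2⟩|⟨u1,u2⟩|⟨u1,u2⟩|⟨u1,u2⟩|⟨u1,u2⟩|⟨u1,u2⟩|⟨u1,u2⟩|⟨u1,u2⟩|⟨u1,u2⟩|⟨u1,u2⟩|⟨u1,u2⟩
      all_goals exact not_both' (by norm_num) (L1 _ _ _ _ (by decide) (by decide)) u1 u2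
    · have ppZ : Prime (p:ℤ) := Int.prime_iff_natAbs_prime.mpr (by simpa using pp)
      have hodd := not_dvd_two_of_prime_ne_two pp hp2
      by_cases hNk : (p:ℤ) ∣ (a 0 + a 1 + a 2 - a k + 1)
      · -- p divides N_k hence p divides c hence P; find the factor pair (k', l')
        have h2c : (p:ℤ) ∣ 2*c := by
          have h5 := dvd_sub hx hNk
          have e : (a 0 + a 1 + a 2 - a k + 2*c + 1) - (a 0 + a 1 + a 2 - a k + 1) = 2*c := by
            ring
          rwa [e] at h5
        have hcdvd : (p:ℤ) ∣ c := (ppZ.dvd_mul.mp h2c).resolve_left hodd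
        have hPdvd : (p:ℤ) ∣ P := dvd_P_of_dvd_c ppZ hodd hc hcdvd
        rw [hP] at hPdvd
        obtain ⟨k', -, hk'⟩ := (ppZ.dvd_finset_prod_iff _).mp hPdvd
        obtain ⟨ℓ', -, hl'⟩ := (ppZ.dvd_finset_prod_iff _).mp hk'
        obtain ⟨r, hrmem, hpr⟩ := (ppZ.dvd_finset_prod_iff _).mp hl'
        rw [Finset.mem_filter] at hrmem
        obtain ⟨hr1, hr2⟩ := hrmem
        rw [Nat.mem_primeFactors] at hr1
        obtain ⟨hrp, hrd, -⟩ := hr1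
        have hpr' : p = r := (Nat.prime_dvd_prime_iff_eq pp hrp).mp (Int.natCast_dvd_natCast.mp hpr)
        subst hpr'
        have hy' : (p:ℤ) ∣ a k' - b ℓ' := Int.natCast_dvd.mpr hrd
        by_cases hkk : k' = k
        · subst hkk
          exact false_of_gcd_one_dvd pp hr2 hNk
        · by_cases hll : ℓ' = ℓ
          · subst hll
            have h6 := dvd_sub hy hy'
            have e : (a k - b ℓ') - (a k' - b ℓ') = a k - a k' := by ring
            rw [e] at h6
            have h7 : (p:ℤ) ∣ (a 0 + a 1 + a 2 - a k' + 1) := by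
              have e2 : a 0 + a 1 + a 2 - a k' + 1
                  = (a 0 + a 1 + a 2 - a k + 1) + (a k - a k') := by ring
              rw [e2]
              exact dvd_add hNk h6
            exact false_of_gcd_one_dvd pp hr2 h7
          · exact not_both' (by exact_mod_cast pp.two_le)
              (L1 k k' ℓ ℓ' (fun h => hkk h.symm) (fun h => hll h.symm)) hy hy'
      · -- p is one of the primes in the product P
        have hmem : p ∈ (a k - b ℓ).natAbs.primeFactors.filter
            (fun (p : ℕ) => Int.gcd (p : ℤ) (a 0 + a 1 + a 2 - a k + 1) = 1) := by
          rw [Finset.mem_filter, Nat.mem_primeFactors]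
          exact ⟨⟨pp, Int.natCast_dvd.mp hy,
            Int.natAbs_ne_zero.mpr (sub_ne_zero.mpr (hne k ℓ))⟩,
            gcd_eq_one_of_not_dvd pp hNk⟩
        have hdP : (p:ℤ) ∣ P := by
          rw [hP]
          have step1 := Finset.dvd_prod_of_mem
            (fun ℓ' : Fin 3 => ∏ p ∈ (a k - b ℓ').natAbs.primeFactors.filter
              (fun (p : ℕ) => Int.gcd (p : ℤ) (a 0 + a 1 + a 2 - a k + 1) = 1), (p:ℤ))
            (Finset.mem_univ ℓ)
          have step2 := Finset.dvd_prod_of_mem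
            (fun k' : Fin 3 => ∏ ℓ' : Fin 3, ∏ p ∈ (a k' - b ℓ').natAbs.primeFactors.filter
              (fun (p : ℕ) => Int.gcd (p : ℤ) (a 0 + a 1 + a 2 - a k' + 1) = 1), (p:ℤ))
            (Finset.mem_univ k)
          exact ((Finset.dvd_prod_of_mem (fun r : ℕ => (r:ℤ)) hmem).trans step1).trans step2
        have ppZ2 : Prime (p:ℤ) := Int.prime_iff_natAbs_prime.mpr (by simpa using pp)
        have hcdvd : (p:ℤ) ∣ c := dvd_c_of_dvd_P hμ hc hdP
        have hNdvd : (p:ℤ) ∣ (a 0 + a 1 + a 2 - a k + 1) := by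
          have h5 := dvd_sub hx (hcdvd.mul_left 2)
          have e : (a 0 + a 1 + a 2 - a k + 2*c + 1) - 2*c = a 0 + a 1 + a 2 - a k + 1 := by
            ring
          rwa [e] at h5
        exact hNk hNdvd
  have key0s : ∀ k ℓ : Fin 3, Int.gcd (a k - b ℓ) (a 0 + a 1 + a 2 - a k + 2*c + 1) = 1 := by
    intro k ℓ; rw [Int.gcd_comm]; exact key0 k ℓ
  have G2 : ∀ k : Fin 3, Int.gcd (a 0 + a 1 + a 2 - a k + 2*c + 1) (-(b 1 + b 2 + 2*c + 1)) = 1 := by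
    intro k
    refine gcd_one_of' (key0 k 0) (fun d h1 _ => h1) (fun d h1 h2 => ?_)
    have h3 := dvd_add h1 h2
    have e : a 0 + a 1 + a 2 - a k + 2*c + 1 + -(b 1 + b 2 + 2*c + 1) = -(a k - b 0) + (a 0 + a 1 + a 2 - (b 0 + b 1 + b 2)) := by ring
    rw [e, hsum] at h3
    simpa using (dvd_neg.mp (by simpa using h3))
  -- entries of q
  have hq0 : q 0 = 2 * (a 0 + c) + 1 := by rw [hq]; simp
  have hq1 : q 1 = 2 * (a 1 + c) + 1 := by rw [hq]; simp
  have hq2 : q 2 = 2 * (a 2 + c) + 1 := by rw [hq]; simp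
  have hq3 : q 3 = -(2 * (b 1 + c) + 1) := by rw [hq]; simp
  have hq4 : q 4 = -(2 * (b 2 + c) + 1) := by rw [hq]; simp
  have F1 : Int.gcd (q 0 + q 1) (q 2 + q 3) = 2 :=
    gcd2' (key0 2 1) (by rw [hq0, hq1]; ring) (by rw [hq2, hq3]; ring)
  have F2 : Int.gcd (q 0 + q 1) (q 2 + q 4) = 2 :=
    gcd2' (key0 2 2) (by rw [hq0, hq1]; ring) (by rw [hq2, hq4]; ring)
  have F3 : Int.gcd (q 0 + q 1) (q 3 + q 4) = 2 :=
    gcd2' (G2 2) (by rw [hq0, hq1]; ring) (by rw [hq3, hq4]; ring)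
  have F4 : Int.gcd (q 0 + q 2) (q 1 + q 3) = 2 :=
    gcd2' (key0 1 1) (by rw [hq0, hq2]; ring) (by rw [hq1, hq3]; ring)
  have F5 : Int.gcd (q 0 + q 2) (q 1 + q 4) = 2 :=
    gcd2' (key0 1 2) (by rw [hq0, hq2]; ring) (by rw [hq1, hq4]; ring)
  have F6 : Int.gcd (q 0 + q 2) (q 3 + q 4) = 2 :=
    gcd2' (G2 1) (by rw [hq0, hq2]; ring) (by rw [hq3, hq4]; ring)
  have F7 : Int.gcd (q 0 + q 3) (q 1 + q 2) = 2 :=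
    gcd2' (key0s 0 1) (by rw [hq0, hq3]; ring) (by rw [hq1, hq2]; ring)
  have F8 : Int.gcd (q 0 + q 3) (q 1 + q 4) = 2 :=
    gcd2' (L1 0 1 1 2 (by decide) (by decide)) (by rw [hq0, hq3]; ring) (by rw [hq1, hq4]; ring)
  have F9 : Int.gcd (q 0 + q 3) (q 2 + q 4) = 2 :=
    gcd2' (L1 0 2 1 2 (by decide) (by decide)) (by rw [hq0, hq3]; ring) (by rw [hq2, hq4]; ring)
  have F10 : Int.gcd (q 0 + q 4) (q 1 + q 2) = 2 :=
    gcd2' (key0s 0 2) (by rw [hq0, hq4]; ring) (by rw [hq1, hq2]; ring)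
  have F11 : Int.gcd (q 0 + q 4) (q 1 + q 3) = 2 :=
    gcd2' (L1 0 1 2 1 (by decide) (by decide)) (by rw [hq0, hq4]; ring) (by rw [hq1, hq3]; ring)
  have F12 : Int.gcd (q 0 + q 4) (q 2 + q 3) = 2 :=
    gcd2' (L1 0 2 2 1 (by decide) (by decide)) (by rw [hq0, hq4]; ring) (by rw [hq2, hq3]; ring)
  have F13 : Int.gcd (q 1 + q 2) (q 3 + q 4) = 2 :=
    gcd2' (G2 0) (by rw [hq1, hq2]; ring) (by rw [hq3, hq4]; ring)
  have F14 : Int.gcd (q 1 + q 3) (q 2 + q 4) = 2 :=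
    gcd2' (L1 1 2 1 2 (by decide) (by decide)) (by rw [hq1, hq3]; ring) (by rw [hq2, hq4]; ring)
  have F15 : Int.gcd (q 1 + q 4) (q 2 + q 3) = 2 :=
    gcd2' (L1 1 2 2 1 (by decide) (by decide)) (by rw [hq1, hq4]; ring) (by rw [hq2, hq3]; ring)
  -- canonical ordered version
  have key' : ∀ i j k l : Fin 5, i < j → k < l → i < k → i ≠ l → j ≠ k → j ≠ l →
      Int.gcd (q i + q j) (q k + q l) = 2 := by
    intro i j k l h1 h2 h3 h4 h5 h6
    fin_cases i <;> fin_cases j <;> fin_cases k <;> fin_cases l <;>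
      first
      | exact absurd h1 (by decide)
      | exact absurd h2 (by decide)
      | exact absurd h3 (by decide)
      | exact absurd rfl h4
      | exact absurd rfl h5
      | exact absurd rfl h6
      | exact F1 | exact F2 | exact F3 | exact F4 | exact F5
      | exact F6 | exact F7 | exact F8 | exact F9 | exact F10
      | exact F11 | exact F12 | exact F13 | exact F14 | exact F15
  have key'' : ∀ i j k l : Fin 5, i < j → k < l → i ≠ k → i ≠ l → j ≠ k → j ≠ l →
      Int.gcd (q i + q j) (q k + q l) = 2 := by
    intro i j k l h1 h2 h3 h4 h5 h6
    rcases lt_or_gt_of_ne h3 with h7 | h7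
    · exact key' i j k l h1 h2 h7 h4 h5 h6
    · rw [Int.gcd_comm]
      exact key' k l i j h2 h1 h7 (fun h => h5 h.symm) (fun h => h4 h.symm) (fun h => h6 h.symm)
  have key : ∀ i j k l : Fin 5, i ≠ j → i ≠ k → i ≠ l → j ≠ k → j ≠ l → k ≠ l →
      Int.gcd (q i + q j) (q k + q l) = 2 := by
    intro i j k l hij hik hil hjk hjl hkl
    rcases lt_or_gt_of_ne hij with h1 | h1 <;> rcases lt_or_gt_of_ne hkl with h2 | h2
    · exact key'' i j k l h1 h2 hik hil hjk hjl
    · rw [add_comm (q k) (q l)]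
      exact key'' i j l k h1 h2 hil hik hjl hjk
    · rw [add_comm (q i) (q j)]
      exact key'' j i k l h1 h2 hjk hjl hik hil
    · rw [add_comm (q i) (q j), add_comm (q k) (q l)]
      exact key'' j i l k h1 h2 hjl hjk hil hik
  constructor
  · intro i
    fin_cases i <;> simp [hq, Int.odd_iff] <;> omega
  · intro σ
    exact key (σ 0) (σ 1) (σ 2) (σ 3)
      (fun h => absurd (σ.injective h) (by decide))
      (fun h => absurd (σ.injective h) (by decide))
      (fun h => absurd (σ.injective h) (by decide))
      (fun h => absurd (σ.injective h) (by decide))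
      (fun h => absurd (σ.injective h) (by decide))
      (fun h => absurd (σ.injective h) (by decide))
end

section
/- Let a = (a₁,a₂,a₃), b = (b₁,b₂,b₃) ∈ ℤ³ satisfy σ₁(a) = σ₁(b), and let c ∈ ℤ. Then the third elementary symmetric polynomial of the 6-tuple q_c equals 8(σ₃(a) − σ₃(b)) − 8(σ₁(a) + 2c + 1)(σ₂(a) − σ₂(b)). -/
/-- The `k`-th elementary symmetric polynomial of the entries of a tuple `x : Fin n → ℤ`. -/
def esymm {n : ℕ} (k : ℕ) (x : Fin n → ℤ) : ℤ :=
  ∑ s ∈ Finset.powersetCard k (Finset.univ : Finset (Fin n)), ∏ i ∈ s, x i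

lemma esymm1_three (x : Fin 3 → ℤ) : esymm 1 x = x 0 + x 1 + x 2 := by
  rw [esymm, show Finset.powersetCard 1 (Finset.univ : Finset (Fin 3)) =
    {({0} : Finset (Fin 3)), {1}, {2}} from by decide]
  simp (config := { decide := true }) [Finset.sum_insert, Finset.prod_insert]
  ring

lemma esymm2_three (x : Fin 3 → ℤ) :
    esymm 2 x = x 0 * x 1 + x 0 * x 2 + x 1 * x 2 := by
  rw [esymm, show Finset.powersetCard 2 (Finset.univ : Finset (Fin 3)) =
    {({0, 1} : Finset (Fin 3)), {0, 2}, {1, 2}} from by decide]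
  simp (config := { decide := true }) [Finset.sum_insert, Finset.prod_insert]
  ring

lemma esymm3_three (x : Fin 3 → ℤ) : esymm 3 x = x 0 * x 1 * x 2 := by
  rw [esymm, show Finset.powersetCard 3 (Finset.univ : Finset (Fin 3)) =
    {({0, 1, 2} : Finset (Fin 3))} from by decide]
  simp (config := { decide := true }) [Finset.sum_insert, Finset.prod_insert]
  ring

lemma esymm3_six (x : Fin 6 → ℤ) : esymm 3 x =
    x 0 * x 1 * x 2 + x 0 * x 1 * x 3 + x 0 * x 1 * x 4 + x 0 * x 1 * x 5
  + x 0 * x 2 * x 3 + x 0 * x 2 * x 4 + x 0 * x 2 * x 5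
  + x 0 * x 3 * x 4 + x 0 * x 3 * x 5 + x 0 * x 4 * x 5
  + x 1 * x 2 * x 3 + x 1 * x 2 * x 4 + x 1 * x 2 * x 5
  + x 1 * x 3 * x 4 + x 1 * x 3 * x 5 + x 1 * x 4 * x 5
  + x 2 * x 3 * x 4 + x 2 * x 3 * x 5 + x 2 * x 4 * x 5
  + x 3 * x 4 * x 5 := by
  rw [esymm, show Finset.powersetCard 3 (Finset.univ : Finset (Fin 6)) =
    {({0,1,2} : Finset (Fin 6)), ({0,1,3} : Finset (Fin 6)), ({0,1,4} : Finset (Fin 6)), ({0,1,5} : Finset (Fin 6)), ({0,2,3} : Finset (Fin 6)), ({0,2,4} : Finset (Fin 6)), ({0,2,5} : Finset (Fin 6)), ({0,3,4} : Finset (Fin 6)), ({0,3,5} : Finset (Fin 6)), ({0,4,5} : Finset (Fin 6)), ({1,2,3} : Finset (Fin 6)), ({1,2,4} : Finset (Fin 6)), ({1,2,5} : Finset (Fin 6)), ({1,3,4} : Finset (Fin 6)), ({1,3,5} : Finset (Fin 6)), ({1,4,5} : Finset (Fin 6)), ({2,3,4} : Finset (Fin 6)), ({2,3,5} : Finset (Fin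 6)), ({2,4,5} : Finset (Fin 6)), ({3,4,5} : Finset (Fin 6))} from by decide]
  simp (config := { decide := true }) [Finset.sum_insert, Finset.prod_insert]
  ring

/-- If `σ₁(a) = σ₁(b)` and `c ∈ ℤ`, then for the 6-tuple
`q_c = (2(a₁+c)+1, 2(a₂+c)+1, 2(a₃+c)+1, −2(b₁+c)−1, −2(b₂+c)−1, −2(b₃+c)−1)` one has
`σ₃(q_c) = 8(σ₃(a) − σ₃(b)) − 8(σ₁(a) + 2c + 1)(σ₂(a) − σ₂(b))`. -/
theorem esymm_three_of_q (a b : Fin 3 → ℤ)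
    (hsum : esymm 1 a = esymm 1 b) (c : ℤ) (q : Fin 6 → ℤ)
    (hq : q = ![2 * (a 0 + c) + 1, 2 * (a 1 + c) + 1, 2 * (a 2 + c) + 1,
      -2 * (b 0 + c) - 1, -2 * (b 1 + c) - 1, -2 * (b 2 + c) - 1]) :
    esymm 3 q =
      8 * (esymm 3 a - esymm 3 b) - 8 * (esymm 1 a + 2 * c + 1) * (esymm 2 a - esymm 2 b) := by
  subst hq
  simp only [esymm1_three, esymm2_three, esymm3_three] at hsum ⊢
  rw [esymm3_six]
  have hb2 : b 2 = a 0 + a 1 + a 2 - b 0 - b 1 := by linarith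
  simp only [Matrix.cons_val_zero, Matrix.cons_val_one, Matrix.head_cons,
    Matrix.cons_val_two, Matrix.tail_cons, Matrix.cons_val_three,
    Matrix.cons_val_four, Matrix.cons_val_fin_one, Matrix.cons_val']
  rw [show (![2 * (a 0 + c) + 1, 2 * (a 1 + c) + 1, 2 * (a 2 + c) + 1,
      -2 * (b 0 + c) - 1, -2 * (b 1 + c) - 1, -2 * (b 2 + c) - 1] : Fin 6 → ℤ) 5
      = -2 * (b 2 + c) - 1 from rfl, hb2]
  ring
end

section
/- Let a = (a₁,a₂,a₃), b = (b₁,b₂,b₃) ∈ ℤ³ satisfy the Eschenburg freeness condition and a₁+a₂+a₃ = b₁+b₂+b₃, and let c ∈ ℤ with |c| > 1. Then the set of integers { |σ₃(q_{c^α})| : α ∈ ℕ, α ≥ 1 } is infinite. -/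
/-- For integer triples `a`, `b` and `e : ℤ`, the 6-tuple
`q_e = (2(a₁+e)+1, 2(a₂+e)+1, 2(a₃+e)+1, −2(b₁+e)−1, −2(b₂+e)−1, −2(b₃+e)−1)`. -/
def qTuple (a b : Fin 3 → ℤ) (e : ℤ) : Fin 6 → ℤ :=
  ![2 * (a 0 + e) + 1, 2 * (a 1 + e) + 1, 2 * (a 2 + e) + 1,
    -2 * (b 0 + e) - 1, -2 * (b 1 + e) - 1, -2 * (b 2 + e) - 1]

set_option maxHeartbeats 1000000
set_option synthInstance.maxHeartbeats 1000000
set_option synthInstance.maxSize 2048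

lemma pc3 : Finset.powersetCard 3 (Finset.univ : Finset (Fin 6)) =
  {({0,1,2} : Finset (Fin 6)), {0,1,3}, {0,1,4}, {0,1,5}, {0,2,3}, {0,2,4}, {0,2,5}, {0,3,4}, {0,3,5}, {0,4,5}, {1,2,3}, {1,2,4}, {1,2,5}, {1,3,4}, {1,3,5}, {1,4,5}, {2,3,4}, {2,3,5}, {2,4,5}, {3,4,5}} := by decide

lemma esymm3_expand (x : Fin 6 → ℤ) : esymm 3 x =
    x 0*x 1*x 2 + x 0*x 1*x 3 + x 0*x 1*x 4 + x 0*x 1*x 5 + x 0*x 2*x 3 + x 0*x 2*x 4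
  + x 0*x 2*x 5 + x 0*x 3*x 4 + x 0*x 3*x 5 + x 0*x 4*x 5 + x 1*x 2*x 3 + x 1*x 2*x 4
  + x 1*x 2*x 5 + x 1*x 3*x 4 + x 1*x 3*x 5 + x 1*x 4*x 5 + x 2*x 3*x 4 + x 2*x 3*x 5
  + x 2*x 4*x 5 + x 3*x 4*x 5 := by
  rw [esymm, pc3]
  simp (config := { decide := true }) only [Finset.sum_insert, Finset.sum_singleton,
    Finset.prod_insert, Finset.prod_singleton, Finset.mem_insert, Finset.mem_singleton]
  ring

lemma key_linear (a b : Fin 3 → ℤ) (hsum : a 0 + a 1 + a 2 = b 0 + b 1 + b 2) (e : ℤ) :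
    esymm 3 (qTuple a b e) = esymm 3 (qTuple a b 0)
      + 16 * ((b 0*b 1 + b 0*b 2 + b 1*b 2) - (a 0*a 1 + a 0*a 2 + a 1*a 2)) * e := by
  have h : ∀ f : ℤ, qTuple a b f 0 = 2*(a 0 + f) + 1 ∧ qTuple a b f 1 = 2*(a 1 + f) + 1 ∧
      qTuple a b f 2 = 2*(a 2 + f) + 1 ∧ qTuple a b f 3 = -2*(b 0 + f) - 1 ∧
      qTuple a b f 4 = -2*(b 1 + f) - 1 ∧ qTuple a b f 5 = -2*(b 2 + f) - 1 := by
    intro f; refine ⟨rfl, rfl, rfl, rfl, rfl, rfl⟩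
  obtain ⟨e0,e1,e2,e3,e4,e5⟩ := h e
  obtain ⟨z0,z1,z2,z3,z4,z5⟩ := h 0
  rw [esymm3_expand, esymm3_expand, e0,e1,e2,e3,e4,e5,z0,z1,z2,z3,z4,z5]
  linear_combination (-16*(e^2+e)) * hsum

lemma zmod2_core : ∀ A0 A1 A2 B0 B1 B2 : ZMod 2,
      A0 + A1 + A2 = B0 + B1 + B2 →
        A0 * A1 + A0 * A2 + A1 * A2 = B0 * B1 + B0 * B2 + B1 * B2 →
          ¬(A0 = B0 ∧ A1 = B1) →
            ¬(A0 = B0 ∧ A1 = B2) →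
              ¬(A0 = B1 ∧ A1 = B0) → ¬(A0 = B1 ∧ A1 = B2) →
                ¬(A0 = B2 ∧ A1 = B0) → ¬(A0 = B2 ∧ A1 = B1) → False := by decide

lemma gcd_parity {x y : ℤ} (h : Int.gcd x y = 1) :
    ¬((x : ZMod 2) = 0 ∧ (y : ZMod 2) = 0) := by
  rintro ⟨hx, hy⟩
  rw [ZMod.intCast_zmod_eq_zero_iff_dvd] at hx hy
  have : (2:ℤ) ∣ (Int.gcd x y : ℤ) := Int.dvd_coe_gcd hx hy
  rw [h] at this
  norm_num at this

lemma sigma2_ne (a b : Fin 3 → ℤ)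
    (hfree : ∀ σ : Equiv.Perm (Fin 3), Int.gcd (a 0 - b (σ 0)) (a 1 - b (σ 1)) = 1)
    (hsum : a 0 + a 1 + a 2 = b 0 + b 1 + b 2) :
    (b 0*b 1 + b 0*b 2 + b 1*b 2) - (a 0*a 1 + a 0*a 2 + a 1*a 2) ≠ 0 := by
  intro h
  have inst : ∀ (σ : Equiv.Perm (Fin 3)) (j k : Fin 3), σ 0 = j → σ 1 = k →
      ¬(((a 0 : ZMod 2)) = (b j : ZMod 2) ∧ ((a 1 : ZMod 2)) = (b k : ZMod 2)) := by
    intro σ j k h0 h1 ⟨q0, q1⟩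
    refine gcd_parity (hfree σ) ⟨?_, ?_⟩ <;> simp only [h0, h1] <;> push_cast <;>
      rw [sub_eq_zero] <;> assumption
  have p01 := inst (Equiv.refl _) 0 1 rfl rfl
  have p02 := inst (Equiv.swap 1 2) 0 2 (by decide) (by decide)
  have p10 := inst (Equiv.swap 0 1) 1 0 (by decide) (by decide)
  have p12 := inst (finRotate 3) 1 2 (by decide) (by decide)
  have p20 := inst ((finRotate 3)⁻¹) 2 0 (by decide) (by decide)
  have p21 := inst (Equiv.swap 0 2) 2 1 (by decide) (by decide)
  have hs : (a 0 : ZMod 2) + (a 1 : ZMod 2) + (a 2 : ZMod 2)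
      = (b 0 : ZMod 2) + (b 1 : ZMod 2) + (b 2 : ZMod 2) := by
    have := congrArg (Int.cast : ℤ → ZMod 2) hsum; push_cast at this; exact this
  have h2 : (a 0 : ZMod 2) * (a 1 : ZMod 2) + (a 0 : ZMod 2) * (a 2 : ZMod 2)
        + (a 1 : ZMod 2) * (a 2 : ZMod 2)
      = (b 0 : ZMod 2) * (b 1 : ZMod 2) + (b 0 : ZMod 2) * (b 2 : ZMod 2)
        + (b 1 : ZMod 2) * (b 2 : ZMod 2) := by
    have := congrArg (Int.cast : ℤ → ZMod 2) h; push_cast at this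
    linear_combination -this
  exact zmod2_core _ _ _ _ _ _ hs h2 p01 p02 p10 p12 p20 p21

/-- **Corollary: infinitely many homotopy types.** If `a`, `b` satisfy the
Eschenburg freeness condition and `a₁+a₂+a₃ = b₁+b₂+b₃`, and `c ∈ ℤ` with `|c| > 1`, then
the set `{ |σ₃(q_{c^α})| : α ≥ 1 }` is infinite. -/
theorem infinitely_many_abs_esymm (a b : Fin 3 → ℤ)
    (hfree : ∀ σ : Equiv.Perm (Fin 3), Int.gcd (a 0 - b (σ 0)) (a 1 - b (σ 1)) = 1)
    (hsum : a 0 + a 1 + a 2 = b 0 + b 1 + b 2)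
    (c : ℤ) (hc : 1 < |c|) :
    {v : ℤ | ∃ α : ℕ, 1 ≤ α ∧ v = |esymm 3 (qTuple a b (c ^ α))|}.Infinite := by
  set K : ℤ := 16 * ((b 0*b 1 + b 0*b 2 + b 1*b 2) - (a 0*a 1 + a 0*a 2 + a 1*a 2)) with hKdef
  have hK : K ≠ 0 := mul_ne_zero (by norm_num) (sigma2_ne a b hfree hsum)
  set P : ℤ := esymm 3 (qTuple a b 0) with hPdef
  by_contra hfin
  rw [Set.not_infinite] at hfin
  obtain ⟨M, hM⟩ := hfin.bddAbove
  obtain ⟨n, hn⟩ := pow_unbounded_of_one_lt (M + |P|) hc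
  have hmem : |esymm 3 (qTuple a b (c ^ (n+1)))| ∈
      {v : ℤ | ∃ α : ℕ, 1 ≤ α ∧ v = |esymm 3 (qTuple a b (c ^ α))|} :=
    ⟨n+1, Nat.le_add_left 1 n, rfl⟩
  have hv := hM hmem
  rw [key_linear a b hsum] at hv
  have hKabs : (1:ℤ) ≤ |K| := Int.one_le_abs hK
  have habs : |K| * |c|^(n+1) - |P| ≤ |P + K * c^(n+1)| := by
    have h := abs_sub_abs_le_abs_sub (K * c^(n+1)) (-P)
    rw [abs_neg, sub_neg_eq_add] at h
    have hma : |K * c^(n+1)| = |K| * |c|^(n+1) :=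
      (abs_mul K (c^(n+1))).trans (by rw [abs_pow c (n+1)])
    calc |K| * |c|^(n+1) - |P| = |K * c^(n+1)| - |P| := by rw [hma]
    _ ≤ |K * c^(n+1) + P| := h
    _ = |P + K * c^(n+1)| := by rw [add_comm]
  have h2 : |c|^n ≤ |c|^(n+1) := pow_le_pow_right₀ (by linarith) (Nat.le_succ n)
  have hpos : (0:ℤ) ≤ |c|^(n+1) := pow_nonneg (abs_nonneg c) _
  have hv' : |P + K * c^(n+1)| ≤ M := by
    simpa [hKdef, hPdef, mul_comm] using hv
  nlinarith [habs, hv', hKabs, h2, hn, hpos]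
end

section
/- Let a = (a₁,a₂,a₃), b = (b₁,b₂,b₃) ∈ ℤ³ satisfy a₁+a₂+a₃ = b₁+b₂+b₃, and suppose gcd(aᵢ+aⱼ+1, a_k−b_ℓ) = 1 for all indices with {i,j,k} = {1,2,3} and all ℓ ∈ {1,2,3}. Then also gcd(bᵢ+bⱼ+1, b_k−a_ℓ) = 1 for all indices with {i,j,k} = {1,2,3} and all ℓ ∈ {1,2,3}. -/
/-- If `a₁+a₂+a₃ = b₁+b₂+b₃` and `gcd(aᵢ+aⱼ+1, a_k−b_ℓ) = 1` for all
indices with `{i,j,k} = {1,2,3}` and all `ℓ ∈ {1,2,3}`, then also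
`gcd(bᵢ+bⱼ+1, b_k−a_ℓ) = 1` for all such indices. -/
theorem nonsingular_swap (a b : Fin 3 → ℤ)
    (hsum : a 0 + a 1 + a 2 = b 0 + b 1 + b 2)
    (h : ∀ σ : Equiv.Perm (Fin 3), ∀ ℓ : Fin 3,
      Int.gcd (a (σ 0) + a (σ 1) + 1) (a (σ 2) - b ℓ) = 1) :
    ∀ σ : Equiv.Perm (Fin 3), ∀ ℓ : Fin 3,
      Int.gcd (b (σ 0) + b (σ 1) + 1) (b (σ 2) - a ℓ) = 1 := by
  have sumlem : ∀ (c : Fin 3 → ℤ) (σ : Equiv.Perm (Fin 3)),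
      c (σ 0) + c (σ 1) + c (σ 2) = c 0 + c 1 + c 2 := by
    intro c σ
    have := Equiv.sum_comp σ c
    simpa [Fin.sum_univ_three, add_assoc] using this
  intro σ ℓ
  set σ' : Equiv.Perm (Fin 3) := Equiv.swap 2 ℓ with hσ'
  have hσ'2 : σ' 2 = ℓ := Equiv.swap_apply_left 2 ℓ
  have key := h σ' (σ 2)
  rw [hσ'2] at key
  have hA : a (σ' 0) + a (σ' 1) = a 0 + a 1 + a 2 - a ℓ := by
    have := sumlem a σ'
    rw [hσ'2] at this
    linarith
  have hc : IsCoprime (a (σ' 0) + a (σ' 1) + 1) (a ℓ - b (σ 2)) :=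
    Int.isCoprime_iff_gcd_eq_one.mpr key
  have hc2 : IsCoprime (a (σ' 0) + a (σ' 1) + 1 + (a ℓ - b (σ 2)) * 1)
      (a ℓ - b (σ 2)) := hc.add_mul_left_left 1
  have hB : b (σ 0) + b (σ 1) = b 0 + b 1 + b 2 - b (σ 2) := by
    have := sumlem b σ
    linarith
  have heq : a (σ' 0) + a (σ' 1) + 1 + (a ℓ - b (σ 2)) * 1
      = b (σ 0) + b (σ 1) + 1 := by
    rw [hA, hB]; linarith
  rw [heq] at hc2
  have := hc2.neg_right
  rw [neg_sub] at this
  exact Int.isCoprime_iff_gcd_eq_one.mp this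
end

section
/- For every integer k ≥ 0, the triples a = (15015k + 39, 0, 0) and b = (15015k + 55, −3, −13) satisfy the Eschenburg freeness condition and a₁+a₂+a₃ = b₁+b₂+b₃, and for every integer c with −(a₂ + a₃ + 1) < 2c < −(b₂ + b₃ + 1) (equivalently, 0 ≤ c ≤ 7) there exist indices with {i,j,k'} = {1,2,3} and ℓ ∈ {1,2,3} such that gcd(aᵢ + aⱼ + 1 + 2c, a_{k'} − b_ℓ) ≠ 1. -/
lemma gcd_ne_one_of_dvd (d x y : ℤ) (hd : 2 ≤ d) (hx : d ∣ x) (hy : d ∣ y) :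
    Int.gcd x y ≠ 1 := by
  intro h
  obtain ⟨u, v, huv⟩ := Int.isCoprime_iff_gcd_eq_one.mpr h
  have h1 : d ∣ 1 := huv ▸ dvd_add (hx.mul_left u) (hy.mul_left v)
  have := Int.le_of_dvd one_pos h1
  omega

lemma s12_0 : (Equiv.swap 1 2 : Equiv.Perm (Fin 3)) 0 = 0 := by decide
lemma s12_1 : (Equiv.swap 1 2 : Equiv.Perm (Fin 3)) 1 = 2 := by decide
lemma s12_2 : (Equiv.swap 1 2 : Equiv.Perm (Fin 3)) 2 = 1 := by decide
lemma rot_0 : (finRotate 3 : Equiv.Perm (Fin 3)) 0 = 1 := by decide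
lemma rot_1 : (finRotate 3 : Equiv.Perm (Fin 3)) 1 = 2 := by decide
lemma rot_2 : (finRotate 3 : Equiv.Perm (Fin 3)) 2 = 0 := by decide

/-- **a cohomogeneity-two family with no positively curved embedding.**
For every integer `k ≥ 0`, the triples `a = (15015k + 39, 0, 0)` and
`b = (15015k + 55, −3, −13)` satisfy the Eschenburg freeness condition and
`a₁+a₂+a₃ = b₁+b₂+b₃`, and for every integer `c` with
`−(a₂+a₃+1) < 2c < −(b₂+b₃+1)` (equivalently `0 ≤ c ≤ 7`) there are indices with
`{i,j,k'} = {1,2,3}` and `ℓ ∈ {1,2,3}` such that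
`gcd(aᵢ + aⱼ + 1 + 2c, a_{k'} − b_ℓ) ≠ 1`. -/
theorem no_positive_bazaikin_family_one (k : ℤ) (hk : 0 ≤ k)
    (a b : Fin 3 → ℤ)
    (ha : a = ![15015 * k + 39, 0, 0]) (hb : b = ![15015 * k + 55, -3, -13]) :
    (∀ σ : Equiv.Perm (Fin 3), Int.gcd (a 0 - b (σ 0)) (a 1 - b (σ 1)) = 1) ∧
    (a 0 + a 1 + a 2 = b 0 + b 1 + b 2) ∧
    (∀ c : ℤ, -(a 1 + a 2 + 1) < 2 * c → 2 * c < -(b 1 + b 2 + 1) →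
      ∃ σ : Equiv.Perm (Fin 3), ∃ ℓ : Fin 3,
        Int.gcd (a (σ 0) + a (σ 1) + 1 + 2 * c) (a (σ 2) - b ℓ) ≠ 1) := by
  subst ha hb
  have fin3 : ∀ i : Fin 3, i = 0 ∨ i = 1 ∨ i = 2 := by decide
  refine ⟨?_, by simp only [Matrix.cons_val_zero, Matrix.cons_val_one, Matrix.head_cons,
      Matrix.cons_val_two, Matrix.tail_cons]; ring, ?_⟩
  · intro σ
    have hinj : σ 0 ≠ σ 1 := fun h => absurd (σ.injective h) (by decide)
    rcases fin3 (σ 0) with h0 | h0 | h0 <;> rcases fin3 (σ 1) with h1 | h1 | h1 <;>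
      rw [h0, h1] <;> rw [h0, h1] at hinj <;>
      simp only [Matrix.cons_val_zero, Matrix.cons_val_one, Matrix.head_cons,
        Matrix.cons_val_two, Matrix.tail_cons] <;>
      rw [← Int.isCoprime_iff_gcd_eq_one]
    · exact absurd rfl hinj
    · exact ⟨-1, -5, by ring⟩
    · exact ⟨4, 5, by ring⟩
    · exact ⟨-4620 * k - 17, -(4620 * k + 13), by ring⟩
    · exact absurd rfl hinj
    · exact ⟨-4, 4620 * k + 13, by ring⟩
    · exact ⟨5005 * k + 18, 5005 * k + 17, by ring⟩
    · exact ⟨1, -(5005 * k + 17), by ring⟩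
    · exact absurd rfl hinj
  · intro c h1 h2
    norm_num [Matrix.cons_val_two, Matrix.tail_cons, Matrix.head_cons] at h1 h2
    have hc1 : 0 ≤ c := by omega
    have hc2 : c ≤ 7 := by omega
    interval_cases c <;>
      [ exact ⟨Equiv.swap 1 2, 0, by
          simp only [s12_0, s12_1, s12_2, Matrix.cons_val_zero, Matrix.cons_val_one,
            Matrix.head_cons, Matrix.cons_val_two, Matrix.tail_cons]
          exact gcd_ne_one_of_dvd 5 _ _ (by norm_num)
            ⟨3003 * k + 8, by ring⟩ ⟨-(3003 * k + 11), by ring⟩⟩;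
        exact ⟨finRotate 3, 1, by
          simp only [rot_0, rot_1, rot_2, Matrix.cons_val_zero, Matrix.cons_val_one,
            Matrix.head_cons, Matrix.cons_val_two, Matrix.tail_cons]
          exact gcd_ne_one_of_dvd 3 _ _ (by norm_num)
            ⟨1, by ring⟩ ⟨5005 * k + 14, by ring⟩⟩;
        exact ⟨Equiv.swap 1 2, 0, by
          simp only [s12_0, s12_1, s12_2, Matrix.cons_val_zero, Matrix.cons_val_one,
            Matrix.head_cons, Matrix.cons_val_two, Matrix.tail_cons]
          exact gcd_ne_one_of_dvd 11 _ _ (by norm_num)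
            ⟨1365 * k + 4, by ring⟩ ⟨-(1365 * k + 5), by ring⟩⟩;
        exact ⟨finRotate 3, 1, by
          simp only [rot_0, rot_1, rot_2, Matrix.cons_val_zero, Matrix.cons_val_one,
            Matrix.head_cons, Matrix.cons_val_two, Matrix.tail_cons]
          exact gcd_ne_one_of_dvd 7 _ _ (by norm_num)
            ⟨1, by ring⟩ ⟨2145 * k + 6, by ring⟩⟩;
        exact ⟨finRotate 3, 1, by
          simp only [rot_0, rot_1, rot_2, Matrix.cons_val_zero, Matrix.cons_val_one,
            Matrix.head_cons, Matrix.cons_val_two, Matrix.tail_cons]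
          exact gcd_ne_one_of_dvd 3 _ _ (by norm_num)
            ⟨3, by ring⟩ ⟨5005 * k + 14, by ring⟩⟩;
        exact ⟨Equiv.swap 1 2, 0, by
          simp only [s12_0, s12_1, s12_2, Matrix.cons_val_zero, Matrix.cons_val_one,
            Matrix.head_cons, Matrix.cons_val_two, Matrix.tail_cons]
          exact gcd_ne_one_of_dvd 5 _ _ (by norm_num)
            ⟨3003 * k + 10, by ring⟩ ⟨-(3003 * k + 11), by ring⟩⟩;
        exact ⟨finRotate 3, 2, by
          simp only [rot_0, rot_1, rot_2, Matrix.cons_val_zero, Matrix.cons_val_one,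
            Matrix.head_cons, Matrix.cons_val_two, Matrix.tail_cons]
          exact gcd_ne_one_of_dvd 13 _ _ (by norm_num)
            ⟨1, by ring⟩ ⟨1155 * k + 4, by ring⟩⟩;
        exact ⟨finRotate 3, 1, by
          simp only [rot_0, rot_1, rot_2, Matrix.cons_val_zero, Matrix.cons_val_one,
            Matrix.head_cons, Matrix.cons_val_two, Matrix.tail_cons]
          exact gcd_ne_one_of_dvd 3 _ _ (by norm_num)
            ⟨5, by ring⟩ ⟨5005 * k + 14, by ring⟩⟩ ]
end
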